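/- arXiv:math/0104111 — 4 statements merged into one kernel-verified Lean document; each statement's English description precedes it below -/
import Mathlib

section
/- Let S be a finite subset of Z^2, and suppose some walk on the slit plane with steps in S ends on the positive x-axis; let p be the smallest positive integer such that a walk on the slit plane ends at (p,0). Let B(x;t) in Q[x,x^{-1}][[t]] be the generating function for bilateral walks, and let log B(x;t) denote the series sum_{k>=1} (-1)^{k-1} (B(x;t)-1)^k / k, which is a well-defined element of Q[x,x^{-1}][[t]] because B(x;t)-1 is a multiple of t. Then the generating function S_{p,0}(t) in Q[[t]] for walks on the slit plane ending at (p,0) satisfies S_{p,0}(t) = [x^p] log B(x;t), the coefficient of x^p in log B(x;t). -/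
open scoped Classical
open PowerSeries

namespace SlitPlane

/-- A point (or step) of the lattice `ℤ²`. -/
abbrev Pt := ℤ × ℤ

/-- All steps of the walk `l` belong to `S`.  A walk is identified with its
list of steps; it starts at the origin. -/
def StepsIn (S : Finset Pt) (l : List Pt) : Prop := ∀ s ∈ l, s ∈ S

/-- The vertex `w_i` of the walk reached after `i` steps. -/
def vert (l : List Pt) (i : ℕ) : Pt := (l.take i).sum

/-- Membership in the half-line `H = {(k,0) : k ≤ 0}`. -/
def OnH (p : Pt) : Prop := p.2 = 0 ∧ p.1 ≤ 0

/-- Membership in the half-line `{(k,0) : k < 0}`. -/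
def OnNegAxis (p : Pt) : Prop := p.2 = 0 ∧ p.1 < 0

/-- A walk on the slit plane: none of the vertices `w_1, ..., w_n` lies on `H`. -/
def AvoidsH (l : List Pt) : Prop := ∀ i, 1 ≤ i → i ≤ l.length → ¬ OnH (vert l i)

/-- Number of walks of length `n` on the slit plane, with steps in `S`, ending at `e`. -/
noncomputable def slitCount (S : Finset Pt) (n : ℕ) (e : Pt) : ℕ :=
  Set.ncard {l : List Pt | l.length = n ∧ StepsIn S l ∧ AvoidsH l ∧ l.sum = e}

/-- Number of (unconstrained) walks of length `n` with steps in `S` ending at `e`. -/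
noncomputable def walkCount (S : Finset Pt) (n : ℕ) (e : Pt) : ℕ :=
  Set.ncard {l : List Pt | l.length = n ∧ StepsIn S l ∧ l.sum = e}

/-- Number of loops of length `n` with steps in `S`: walks ending at the origin,
none of whose vertices lies on `{(k,0) : k < 0}`. -/
noncomputable def loopCount (S : Finset Pt) (n : ℕ) : ℕ :=
  Set.ncard {l : List Pt | l.length = n ∧ StepsIn S l ∧
    (∀ i ≤ l.length, ¬ OnNegAxis (vert l i)) ∧ l.sum = (0, 0)}

end SlitPlane

namespace SlitPlane

/-- The Laurent polynomial ring `ℚ[x, x⁻¹]`: monomial `i` stands for `x^i`. -/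
abbrev L1 := AddMonoidAlgebra ℚ ℤ

/-- The series `log B = ∑_{k ≥ 1} (-1)^(k-1) (B-1)^k / k`, defined coefficientwise:
since `B - 1` is a multiple of `t`, only the terms with `k ≤ n` contribute to the
coefficient of `t^n`. -/
noncomputable def logSeries (B : PowerSeries L1) : PowerSeries L1 :=
  PowerSeries.mk fun n => ∑ k ∈ Finset.range (n + 1),
    if k = 0 then 0 else
      ((-1 : ℚ) ^ (k - 1) / k) • PowerSeries.coeff (R := L1) n ((B - 1) ^ k)

/- ### generating function helpers -/

noncomputable def gfw {α : Type} (W : Finset α) (w : α → ℤ) : L1 :=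
  ∑ a ∈ W, AddMonoidAlgebra.single (w a) (1 : ℚ)

lemma gfw_apply {α : Type} (W : Finset α) (w : α → ℤ) (i : ℤ) :
    (gfw W w).coeff i = ((W.filter (fun a => w a = i)).card : ℚ) := by
  rw [gfw, AddMonoidAlgebra.coeff_sum, Finsupp.finset_sum_apply, Finset.card_filter]
  push_cast
  refine Finset.sum_congr rfl fun a _ => ?_
  rw [AddMonoidAlgebra.coeff_single, Finsupp.single_apply]

/- ### finsets of walks -/

def walksFin (S : Finset Pt) : ℕ → Finset (List Pt)
  | 0 => {[]}
  | n+1 => (S ×ˢ walksFin S n).image fun q => q.1 :: q.2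

lemma mem_walksFin {S : Finset Pt} : ∀ {n : ℕ} {l : List Pt},
    l ∈ walksFin S n ↔ (l.length = n ∧ StepsIn S l) := by
  intro n
  induction n with
  | zero =>
    intro l
    constructor
    · intro h
      have : l = [] := by simpa [walksFin] using h
      subst this; exact ⟨rfl, by simp [StepsIn]⟩
    · rintro ⟨h, -⟩
      have : l = [] := List.length_eq_zero_iff.1 h
      subst this; simp [walksFin]
  | succ n ih =>
    intro l
    simp only [walksFin, Finset.mem_image, Finset.mem_product]
    constructor
    · rintro ⟨⟨s, m⟩, ⟨hs, hm⟩, rfl⟩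
      obtain ⟨h1, h2⟩ := ih.1 hm
      refine ⟨by simp [h1], ?_⟩
      intro x hx
      rcases List.mem_cons.1 hx with rfl | hx
      · exact hs
      · exact h2 x hx
    · rintro ⟨h1, h2⟩
      cases l with
      | nil => simp at h1
      | cons s m =>
        exact ⟨(s, m), ⟨h2 s (by simp), ih.2 ⟨by simpa using h1, fun x hx => h2 x (by simp [hx])⟩⟩, rfl⟩

def ArchCore (l : List Pt) : Prop :=
  l ≠ [] ∧ (∀ i, 1 ≤ i → i < l.length → (vert l i).2 ≠ 0) ∧ l.sum.2 = 0

noncomputable def archesFin (S : Finset Pt) (n : ℕ) : Finset (List Pt) :=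
  (walksFin S n).filter ArchCore

noncomputable def bilatFin (S : Finset Pt) (n : ℕ) : Finset (List Pt) :=
  (walksFin S n).filter (fun l => l.sum.2 = 0)

lemma mem_archesFin {S : Finset Pt} {n : ℕ} {l : List Pt} :
    l ∈ archesFin S n ↔ l.length = n ∧ StepsIn S l ∧ ArchCore l := by
  simp [archesFin, mem_walksFin, and_assoc]

lemma mem_bilatFin {S : Finset Pt} {n : ℕ} {l : List Pt} :
    l ∈ bilatFin S n ↔ l.length = n ∧ StepsIn S l ∧ l.sum.2 = 0 := by
  simp [bilatFin, mem_walksFin, and_assoc]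


/- ### vertices and appending -/

lemma vert_append_left {u v : List Pt} {i : ℕ} (h : i ≤ u.length) :
    vert (u ++ v) i = vert u i := by
  unfold vert; rw [List.take_append_of_le_length h]

lemma vert_append_right (u v : List Pt) (i : ℕ) :
    vert (u ++ v) (u.length + i) = u.sum + vert v i := by
  unfold vert; rw [List.take_append, List.take_of_length_le (Nat.le_add_right _ _),
    Nat.add_sub_cancel_left, List.sum_append]

lemma vert_length (l : List Pt) : vert l l.length = l.sum := by
  unfold vert; rw [List.take_length]

def AvoidsFrom (q : Pt) (l : List Pt) : Prop :=
  ∀ i, 1 ≤ i → i ≤ l.length → ¬ OnH (q + vert l i)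

lemma avoidsH_iff {l : List Pt} : AvoidsH l ↔ AvoidsFrom (0, 0) l := by
  unfold AvoidsH AvoidsFrom
  constructor <;> intro h i h1 h2 <;> have := h i h1 h2 <;>
    simpa [Prod.ext_iff, Prod.mk_zero_zero] using this

lemma avoidsFrom_append {q : Pt} {u v : List Pt} :
    AvoidsFrom q (u ++ v) ↔ AvoidsFrom q u ∧ AvoidsFrom (q + u.sum) v := by
  constructor
  · intro h
    refine ⟨fun i h1 h2 => ?_, fun i h1 h2 => ?_⟩
    · have := h i h1 (by simp; omega)
      rwa [vert_append_left h2] at this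
    · have := h (u.length + i) (by omega) (by simp; omega)
      rwa [vert_append_right, ← add_assoc] at this
  · rintro ⟨h1, h2⟩ i hi1 hi2
    rcases le_or_gt i u.length with h | h
    · rw [vert_append_left h]; exact h1 i hi1 h
    · have hi : i = u.length + (i - u.length) := by omega
      rw [hi, vert_append_right, ← add_assoc]
      exact h2 _ (by omega) (by simp at hi2; omega)

lemma avoidsFrom_arch {q : Pt} {a : List Pt} (ha : ArchCore a) (hq : q.2 = 0) :
    AvoidsFrom q a ↔ 0 < q.1 + a.sum.1 := by
  obtain ⟨hne, hint, hsum⟩ := ha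
  have hlen : 1 ≤ a.length := List.length_pos_iff.2 hne
  constructor
  · intro h
    have := h a.length hlen le_rfl
    rw [vert_length] at this
    simp only [OnH, not_and, not_le] at this
    exact this (by simp [Prod.snd_add, hq, hsum])
  · intro h i h1 h2
    rcases eq_or_lt_of_le h2 with rfl | hlt
    · rw [vert_length]
      rintro ⟨-, h2'⟩
      simp only [Prod.fst_add] at h2'; omega
    · rintro ⟨hy, -⟩
      have := hint i h1 hlt
      simp only [Prod.snd_add, hq, zero_add] at hy
      exact this hy

/- ### flatten lemmas -/

lemma flatten_snd {L : List (List Pt)} (h : ∀ a ∈ L, a.sum.2 = 0) :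
    L.flatten.sum.2 = 0 := by
  induction L with
  | nil => simp
  | cons a L ih =>
    simp only [List.flatten_cons, List.sum_append, Prod.snd_add]
    rw [h a (by simp), ih (fun b hb => h b (by simp [hb]))]
    simp

lemma flatten_fst (L : List (List Pt)) :
    L.flatten.sum.1 = (L.map (fun l => l.sum.1)).sum := by
  induction L with
  | nil => simp
  | cons a L ih =>
    simp only [List.flatten_cons, List.sum_append, Prod.fst_add, List.map_cons, List.sum_cons, ih]

lemma stepsIn_flatten {S : Finset Pt} {L : List (List Pt)} (h : ∀ a ∈ L, StepsIn S a) :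
    StepsIn S L.flatten := by
  intro s hs
  obtain ⟨a, ha, hsa⟩ := List.mem_flatten.1 hs
  exact h a ha s hsa

/-- partial sums of abscissas -/
def psum (L : List (List Pt)) (j : ℕ) : ℤ := ((L.map (fun l => l.sum.1)).take j).sum

def Good (L : List (List Pt)) : Prop := ∀ j, 1 ≤ j → j ≤ L.length → 0 < psum L j

lemma psum_cons (a : List Pt) (L : List (List Pt)) (j : ℕ) :
    psum (a :: L) (j + 1) = a.sum.1 + psum L j := by
  simp [psum]

lemma avoidsFrom_flatten {L : List (List Pt)} (hL : ∀ a ∈ L, ArchCore a) :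
    ∀ {q : Pt}, q.2 = 0 →
      (AvoidsFrom q L.flatten ↔ ∀ j, 1 ≤ j → j ≤ L.length → 0 < q.1 + psum L j) := by
  induction L with
  | nil =>
    intro q hq
    constructor
    · intro _ j h1 h2; simp at h2; omega
    · intro _ i h1 h2; simp at h2; omega
  | cons a L ih =>
    intro q hq
    have ha : ArchCore a := hL a (by simp)
    have hL' : ∀ b ∈ L, ArchCore b := fun b hb => hL b (by simp [hb])
    rw [List.flatten_cons, avoidsFrom_append, avoidsFrom_arch ha hq,
      ih hL' (by simp [Prod.snd_add, hq, ha.2.2])]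
    constructor
    · rintro ⟨h1, h2⟩ j hj1 hj2
      rcases Nat.exists_eq_add_of_le hj1 with ⟨j', rfl⟩
      rw [add_comm 1 j', psum_cons]
      rcases Nat.eq_zero_or_pos j' with rfl | hj'
      · simpa [psum] using h1
      · have := h2 j' hj' (by simp at hj2; omega)
        simp only [Prod.fst_add] at this; omega
    · intro h
      constructor
      · have := h 1 le_rfl (by simp)
        simpa [psum] using this
      · intro j hj1 hj2
        have := h (j + 1) (by omega) (by simp; omega)
        rw [psum_cons] at this
        simp only [Prod.fst_add]; omega


/- ### decomposition into arches -/

lemma exists_arch_split {S : Finset Pt} {c : List Pt} (hc : c ≠ []) (hst : StepsIn S c)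
    (hb : c.sum.2 = 0) :
    ∃ a b : List Pt, ArchCore a ∧ StepsIn S a ∧ StepsIn S b ∧ b.sum.2 = 0 ∧
      c = a ++ b ∧ b.length < c.length := by
  have hlen : 1 ≤ c.length := List.length_pos_iff.2 hc
  have hP : ∃ j, 1 ≤ j ∧ j ≤ c.length ∧ (vert c j).2 = 0 :=
    ⟨c.length, hlen, le_rfl, by rw [vert_length]; exact hb⟩
  classical
  obtain ⟨j, ⟨hj1, hj2, hj3⟩, hjmin⟩ :
      ∃ j, (1 ≤ j ∧ j ≤ c.length ∧ (vert c j).2 = 0) ∧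
        ∀ i, i < j → ¬(1 ≤ i ∧ i ≤ c.length ∧ (vert c i).2 = 0) :=
    ⟨Nat.find hP, Nat.find_spec hP, fun i hi => Nat.find_min hP hi⟩
  refine ⟨c.take j, c.drop j, ⟨?_, ?_, ?_⟩, ?_, ?_, ?_, ?_, ?_⟩
  · intro h
    have : (c.take j).length = 0 := by rw [h]; rfl
    rw [List.length_take] at this
    omega
  · intro i hi1 hi2
    rw [List.length_take] at hi2
    have hij : i < j := by omega
    have : vert (c.take j) i = vert c i := by
      unfold vert; rw [List.take_take, min_eq_left hij.le]
    rw [this]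
    intro hzero
    exact hjmin i hij ⟨hi1, by omega, hzero⟩
  · show (c.take j).sum.2 = 0
    exact hj3
  · exact fun s hs => hst s (List.mem_of_mem_take hs)
  · exact fun s hs => hst s (List.mem_of_mem_drop hs)
  · have := List.sum_take_add_sum_drop c j
    have h2 : (c.take j).sum.2 + (c.drop j).sum.2 = c.sum.2 := by
      rw [← Prod.snd_add, this]
    have hj3' : (c.take j).sum.2 = 0 := hj3
    rw [hb, hj3'] at h2
    omega
  · exact (List.take_append_drop j c).symm
  · rw [List.length_drop]; omega

lemma arch_prefix_eq {a b u v : List Pt} (ha : ArchCore a) (hb : ArchCore b)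
    (h : a ++ u = b ++ v) : a = b ∧ u = v := by
  have key : ∀ {a b u v : List Pt}, ArchCore a → ArchCore b → a ++ u = b ++ v →
      a.length ≤ b.length → a.length = b.length := by
    intro a b u v ha hb h hle
    by_contra hne
    have hlt : a.length < b.length := lt_of_le_of_ne hle hne
    have hpre : a = b.take a.length := by
      have h1 : (a ++ u).take a.length = a := by
        rw [List.take_append_of_le_length le_rfl, List.take_length]
      have h2 : (b ++ v).take a.length = b.take a.length :=
        List.take_append_of_le_length (le_of_lt hlt)
      have h3 : (a ++ u).take a.length = (b ++ v).take a.length := by rw [h]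
      rwa [h1, h2] at h3
    have hv : (vert b a.length).2 = 0 := by
      have heq : vert b a.length = a.sum := congrArg List.sum hpre.symm
      rw [heq]; exact ha.2.2
    exact hb.2.1 a.length (List.length_pos_iff.2 ha.1) hlt hv
  have hlen : a.length = b.length := by
    rcases le_total a.length b.length with hle | hle
    · exact key ha hb h hle
    · exact (key hb ha h.symm hle).symm
  exact List.append_inj h hlen

lemma decomp_unique : ∀ {L M : List (List Pt)}, (∀ a ∈ L, ArchCore a) →
    (∀ a ∈ M, ArchCore a) → L.flatten = M.flatten → L = M := by
  intro L
  induction L with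
  | nil =>
    intro M _ hM h
    cases M with
    | nil => rfl
    | cons b M =>
      exfalso
      have : b ++ M.flatten = [] := by rw [← List.flatten_cons, ← h]; rfl
      have := List.append_eq_nil_iff.1 this
      exact (hM b (by simp)).1 this.1
  | cons a L ih =>
    intro M hL hM h
    cases M with
    | nil =>
      exfalso
      have : a ++ L.flatten = [] := by rw [← List.flatten_cons, h]; rfl
      have := List.append_eq_nil_iff.1 this
      exact (hL a (by simp)).1 this.1
    | cons b M =>
      simp only [List.flatten_cons] at h
      obtain ⟨hab, hres⟩ := arch_prefix_eq (hL a (by simp)) (hM b (by simp)) h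
      subst hab
      rw [ih (fun x hx => hL x (by simp [hx])) (fun x hx => hM x (by simp [hx])) hres]

lemma exists_decomp {S : Finset Pt} : ∀ (N : ℕ) (c : List Pt), c.length ≤ N → c ≠ [] →
    StepsIn S c → c.sum.2 = 0 →
    ∃ L : List (List Pt), (∀ a ∈ L, ArchCore a ∧ StepsIn S a) ∧ L.flatten = c ∧ L ≠ [] := by
  intro N
  induction N with
  | zero =>
    intro c hlen hc _ _
    exact absurd (List.length_eq_zero_iff.1 (Nat.le_zero.1 hlen)) hc
  | succ N ih =>
    intro c hlen hc hst hb
    obtain ⟨a, b, ha, hsa, hsb, hb2, hcab, hblt⟩ := exists_arch_split hc hst hb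
    rcases eq_or_ne b [] with rfl | hbne
    · refine ⟨[a], ?_, by simp [hcab], by simp⟩
      intro x hx; simp at hx; subst hx; exact ⟨ha, hsa⟩
    · obtain ⟨L, hL1, hL2, hL3⟩ := ih b (by omega) hbne hsb hb2
      refine ⟨a :: L, ?_, by simp [hL2, hcab], by simp⟩
      intro x hx
      rcases List.mem_cons.1 hx with rfl | hx
      · exact ⟨ha, hsa⟩
      · exact hL1 x hx

lemma length_le_flatten_length {L : List (List Pt)} (h : ∀ a ∈ L, a ≠ []) :
    L.length ≤ L.flatten.length := by
  induction L with
  | nil => simp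
  | cons a L ih =>
    simp only [List.flatten_cons, List.length_append, List.length_cons]
    have h1 : 1 ≤ a.length := List.length_pos_iff.2 (h a (by simp))
    have h2 := ih (fun b hb => h b (by simp [hb]))
    omega


/- ### rotations and the cycle lemma -/

lemma take_drop_sum (a : List ℤ) (m j : ℕ) :
    ((a.drop m).take j).sum = (a.take (m + j)).sum - (a.take m).sum := by
  rw [List.take_add, List.sum_append]; ring

lemma rotate_take_sum_low {a : List ℤ} {m j : ℕ} (hm : m ≤ a.length) (hj : j ≤ a.length - m) :
    ((a.rotate m).take j).sum = (a.take (m + j)).sum - (a.take m).sum := by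
  rw [List.rotate_eq_drop_append_take hm,
    List.take_append_of_le_length (by rw [List.length_drop]; exact hj), take_drop_sum]

lemma rotate_take_sum_high {a : List ℤ} {m i : ℕ} (hm : m ≤ a.length) (hi : i ≤ m) :
    ((a.rotate m).take (a.length - m + i)).sum = a.sum - (a.take m).sum + (a.take i).sum := by
  rw [List.rotate_eq_drop_append_take hm]
  have hlen : (a.drop m).length = a.length - m := List.length_drop
  rw [← hlen, List.take_append, List.take_of_length_le (Nat.le_add_right _ _),
    Nat.add_sub_cancel_left, List.sum_append, List.take_take, min_eq_left hi]
  have := List.sum_take_add_sum_drop a m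
  omega

lemma exists_good_rotation_z (a : List ℤ) (ha : a ≠ []) (hpos : 0 < a.sum) :
    ∃ r, r < a.length ∧ ∀ j, 1 ≤ j → j ≤ a.length → 0 < ((a.rotate r).take j).sum := by
  classical
  set k := a.length with hk
  set s : ℕ → ℤ := fun j => (a.take j).sum with hs
  set T : Finset ℤ := (Finset.range (k+1)).image s with hT
  have hTne : T.Nonempty := ⟨s 0, Finset.mem_image.2 ⟨0, by simp, rfl⟩⟩
  set μ : ℤ := T.min' hTne with hμ
  have hμle : ∀ j, j ≤ k → μ ≤ s j := fun j hj =>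
    Finset.min'_le T _ (Finset.mem_image.2 ⟨j, Finset.mem_range.2 (by omega), rfl⟩)
  obtain ⟨m0, hm0r, hm0⟩ := Finset.mem_image.1 (T.min'_mem hTne)
  rw [Finset.mem_range] at hm0r
  set m := Nat.findGreatest (fun m => s m = μ) k with hm
  have hmspec : s m = μ := by
    rw [hm]; exact Nat.findGreatest_spec (P := fun m => s m = μ) (by omega : m0 ≤ k) hm0
  have hmle : m ≤ k := Nat.findGreatest_le k
  have hgt : ∀ j, m < j → j ≤ k → μ < s j := by
    intro j h1 h2
    have hne : s j ≠ μ := Nat.findGreatest_is_greatest (by rw [hm] at h1; exact h1) h2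
    exact lt_of_le_of_ne (hμle j h2) (Ne.symm hne)
  have hs0 : s 0 = 0 := by simp [hs]
  have hsk : s k = a.sum := by simp [hs, hk]
  have hmk : m < k := by
    rcases eq_or_lt_of_le hmle with heq | h
    · exfalso
      have h1 : μ ≤ 0 := by rw [← hs0]; exact hμle 0 (by omega)
      rw [← heq, hmspec] at hsk
      omega
    · exact h
  refine ⟨m, hmk, ?_⟩
  intro j h1 h2
  rcases le_or_gt j (k - m) with hle | hlt
  · rw [rotate_take_sum_low hmle hle]
    have := hgt (m + j) (by omega) (by omega)
    show 0 < s (m + j) - s m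
    omega
  · have hidef : j = k - m + (j - (k - m)) := by omega
    set i := j - (k - m) with hi
    have hi1 : i ≤ m := by omega
    rw [hidef, rotate_take_sum_high hmle hi1]
    have := hμle i (by omega)
    show 0 < a.sum - s m + s i
    omega

lemma psum_rotate (L : List (List Pt)) (r j : ℕ) :
    psum (L.rotate r) j = (((L.map fun l => l.sum.1).rotate r).take j).sum := by
  rw [psum, List.map_rotate]

lemma exists_good_rotation (L : List (List Pt)) (hL : L ≠ []) (hpos : 0 < L.flatten.sum.1) :
    ∃ r, r < L.length ∧ Good (L.rotate r) := by
  obtain ⟨r, hr, h⟩ := exists_good_rotation_z (L.map fun l => l.sum.1)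
    (by simpa using hL) (by rwa [← flatten_fst])
  refine ⟨r, by simpa using hr, ?_⟩
  intro j h1 h2
  rw [List.length_rotate] at h2
  have := h j h1 (by simpa using h2)
  rwa [psum_rotate]

lemma good_rotation_unique_aux {S : Finset Pt} {p : ℤ}
    (hmin : ∀ q : ℤ, 0 < q → (∃ l, StepsIn S l ∧ AvoidsH l ∧ l.sum = (q, 0)) → p ≤ q)
    {L : List (List Pt)} (hL : ∀ a ∈ L, ArchCore a ∧ StepsIn S a)
    (hsum : L.flatten.sum.1 = p)
    {r r' : ℕ} (hrr : r < r') (hr' : r' < L.length)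
    (hg : Good (L.rotate r)) (hg' : Good (L.rotate r')) : False := by
  classical
  set k := L.length with hk
  set xs : List ℤ := L.map fun l => l.sum.1 with hxs
  have hxslen : xs.length = k := by simp [hxs, hk]
  have hxsum : xs.sum = p := by rw [← hsum, flatten_fst]
  set s : ℕ → ℤ := fun j => (xs.take j).sum with hsdef
  have hr : r < k := lt_trans hrr hr'
  -- the value q
  set q : ℤ := s r' - s r with hq
  -- q > 0 from hg
  have hq1 : psum (L.rotate r) (r' - r) = q := by
    rw [psum_rotate, ← hxs, rotate_take_sum_low (by omega) (by omega)]
    have : r + (r' - r) = r' := by omega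
    rw [this]
  have hqpos : 0 < q := by
    rw [← hq1]
    exact hg (r' - r) (by omega) (by rw [List.length_rotate]; omega)
  -- q < p from hg'
  have hq2 : psum (L.rotate r') (k - r' + r) = xs.sum - s r' + s r := by
    rw [psum_rotate, ← hxs, ← hxslen, rotate_take_sum_high (by omega) (by omega)]
  have hqlt : q < p := by
    have := hg' (k - r' + r) (by omega) (by rw [List.length_rotate]; omega)
    rw [hq2] at this
    rw [hq, ← hxsum]
    omega
  -- the walk M
  set M : List (List Pt) := (L.rotate r).take (r' - r) with hM
  have hMmem : ∀ a ∈ M, a ∈ L := fun a ha =>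
    (List.rotate_perm L r).mem_iff.1 (List.mem_of_mem_take ha)
  have hMarch : ∀ a ∈ M, ArchCore a := fun a ha => (hL a (hMmem a ha)).1
  have hMlen : M.length = r' - r := by
    rw [hM, List.length_take, List.length_rotate]
    omega
  have hMpsum : ∀ j, j ≤ r' - r → psum M j = psum (L.rotate r) j := by
    intro j hj
    rw [psum, psum, hM, List.map_take, List.take_take, min_eq_left hj, ← List.map_take]
  have hMflat1 : M.flatten.sum.1 = q := by
    rw [flatten_fst, ← List.take_length (l := M.map _), List.length_map, hMlen]
    show psum M (r' - r) = q
    rw [hMpsum _ le_rfl, hq1]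
  have hMflat2 : M.flatten.sum.2 = 0 := flatten_snd (fun a ha => (hMarch a ha).2.2)
  have hMgood : AvoidsH M.flatten := by
    rw [avoidsH_iff, avoidsFrom_flatten hMarch (by rfl)]
    intro j h1 h2
    rw [hMlen] at h2
    rw [hMpsum j h2]
    simpa using hg j h1 (by rw [List.length_rotate]; omega)
  have hle : p ≤ q := by
    refine hmin q hqpos ⟨M.flatten, stepsIn_flatten (fun a ha => (hL a (hMmem a ha)).2), hMgood, ?_⟩
    exact Prod.ext hMflat1 hMflat2
  omega

lemma good_rotation_unique {S : Finset Pt} {p : ℤ}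
    (hmin : ∀ q : ℤ, 0 < q → (∃ l, StepsIn S l ∧ AvoidsH l ∧ l.sum = (q, 0)) → p ≤ q)
    {L : List (List Pt)} (hL : ∀ a ∈ L, ArchCore a ∧ StepsIn S a)
    (hsum : L.flatten.sum.1 = p)
    {r r' : ℕ} (hr : r < L.length) (hr' : r' < L.length)
    (hg : Good (L.rotate r)) (hg' : Good (L.rotate r')) : r = r' := by
  rcases lt_trichotomy r r' with h | h | h
  · exact absurd (good_rotation_unique_aux hmin hL hsum h hr' hg hg') not_false
  · exact h
  · exact absurd (good_rotation_unique_aux hmin hL hsum h hr hg' hg) not_false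


/- ### generating functions of walks -/

lemma gfw_mul {α β : Type} (W : Finset α) (V : Finset β) (w : α → ℤ) (v : β → ℤ) :
    gfw W w * gfw V v = ∑ q ∈ W ×ˢ V, AddMonoidAlgebra.single (w q.1 + v q.2) (1:ℚ) := by
  rw [gfw, gfw, Finset.sum_mul_sum, Finset.sum_product]
  refine Finset.sum_congr rfl fun a _ => Finset.sum_congr rfl fun b _ => ?_
  rw [AddMonoidAlgebra.single_mul_single, one_mul]

noncomputable def archGF (S : Finset Pt) : PowerSeries L1 :=
  PowerSeries.mk fun n => gfw (archesFin S n) (fun l => l.sum.1)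

lemma walkCount_eq_card (S : Finset Pt) (n : ℕ) (i : ℤ) :
    walkCount S n (i, 0) = ((bilatFin S n).filter (fun l => l.sum.1 = i)).card := by
  rw [walkCount, ← Set.ncard_coe_finset]
  congr 1
  ext l
  simp only [Set.mem_setOf_eq, Finset.coe_filter, mem_bilatFin, Prod.ext_iff]
  tauto

lemma slitCount_eq_card (S : Finset Pt) (n : ℕ) (e : Pt) :
    slitCount S n e = ((walksFin S n).filter (fun l => AvoidsH l ∧ l.sum = e)).card := by
  rw [slitCount, ← Set.ncard_coe_finset]
  congr 1
  ext l
  simp only [Set.mem_setOf_eq, Finset.coe_filter, mem_walksFin]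
  tauto

lemma archesFin_zero (S : Finset Pt) : archesFin S 0 = ∅ := by
  refine Finset.eq_empty_of_forall_notMem fun l hl => ?_
  obtain ⟨h1, -, h3⟩ := mem_archesFin.1 hl
  exact h3.1 (List.length_eq_zero_iff.1 h1)

lemma bilatFin_zero (S : Finset Pt) : bilatFin S 0 = {[]} := by
  ext l
  simp [mem_bilatFin, List.length_eq_zero_iff, StepsIn]
  rintro rfl
  simp

section Counting

variable {S : Finset Pt} {B : PowerSeries L1}
variable (hBe : ∀ n, PowerSeries.coeff (R := L1) n B = gfw (bilatFin S n) (fun l => l.sum.1))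

include hBe

lemma coeff_AB (n : ℕ) (hn : 1 ≤ n) :
    PowerSeries.coeff (R := L1) n (archGF S * B) = gfw (bilatFin S n) (fun l => l.sum.1) := by
  rw [PowerSeries.coeff_mul]
  rw [Finset.sum_congr rfl (fun mm _ => by
    rw [archGF, coeff_mk, hBe, gfw_mul] :
      ∀ mm ∈ Finset.HasAntidiagonal.antidiagonal n, PowerSeries.coeff (R := L1) mm.1 (archGF S) * PowerSeries.coeff (R := L1) mm.2 B
      = ∑ q ∈ archesFin S mm.1 ×ˢ bilatFin S mm.2,
          AddMonoidAlgebra.single (q.1.sum.1 + q.2.sum.1) (1:ℚ))]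
  rw [Finset.sum_sigma' (Finset.HasAntidiagonal.antidiagonal n)
    (fun mm => archesFin S mm.1 ×ˢ bilatFin S mm.2)
    (fun _ q => AddMonoidAlgebra.single (q.1.sum.1 + q.2.sum.1) (1:ℚ)), gfw]
  refine Finset.sum_bij (fun x _ => x.2.1 ++ x.2.2) ?_ ?_ ?_ ?_
  · rintro ⟨⟨m1, m2⟩, a, b⟩ hx
    simp only [Finset.mem_sigma, Finset.HasAntidiagonal.mem_antidiagonal, Finset.mem_product] at hx
    obtain ⟨hmm, ha, hb⟩ := hx
    obtain ⟨ha1, ha2, ha3⟩ := mem_archesFin.1 ha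
    obtain ⟨hb1, hb2, hb3⟩ := mem_bilatFin.1 hb
    refine mem_bilatFin.2 ⟨by simp [ha1, hb1, hmm], ?_, ?_⟩
    · intro x hx
      rcases List.mem_append.1 hx with h | h
      · exact ha2 x h
      · exact hb2 x h
    · rw [List.sum_append, Prod.snd_add, ha3.2.2, hb3]; simp
  · rintro ⟨⟨m1, m2⟩, a, b⟩ hx ⟨⟨m1', m2'⟩, a', b'⟩ hy heq
    simp only [Finset.mem_sigma, Finset.HasAntidiagonal.mem_antidiagonal, Finset.mem_product] at hx hy
    obtain ⟨-, ha, hb⟩ := hx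
    obtain ⟨-, ha', hb'⟩ := hy
    obtain ⟨rfl, rfl⟩ := arch_prefix_eq (mem_archesFin.1 ha).2.2 (mem_archesFin.1 ha').2.2 heq
    have h1 : m1 = m1' := by
      rw [← (mem_archesFin.1 ha).1, ← (mem_archesFin.1 ha').1]
    have h2 : m2 = m2' := by
      rw [← (mem_bilatFin.1 hb).1, ← (mem_bilatFin.1 hb').1]
    subst h1; subst h2; rfl
  · intro c hc
    obtain ⟨hc1, hc2, hc3⟩ := mem_bilatFin.1 hc
    have hcne : c ≠ [] := by
      intro h; rw [h] at hc1; simp at hc1; omega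
    obtain ⟨a, b, ha, hsa, hsb, hb2, hcab, -⟩ := exists_arch_split hcne hc2 hc3
    refine ⟨⟨⟨a.length, b.length⟩, a, b⟩, ?_, hcab.symm⟩
    simp only [Finset.mem_sigma, Finset.HasAntidiagonal.mem_antidiagonal, Finset.mem_product]
    refine ⟨by rw [← hc1, hcab]; simp, mem_archesFin.2 ⟨rfl, hsa, ha⟩,
      mem_bilatFin.2 ⟨rfl, hsb, hb2⟩⟩
  · rintro ⟨⟨m1, m2⟩, a, b⟩ _
    rw [List.sum_append, Prod.fst_add]

lemma coeff_B_zero : PowerSeries.coeff (R := L1) 0 B = 1 := by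
  rw [hBe 0, bilatFin_zero, gfw, Finset.sum_singleton]
  have h : ([] : List Pt).sum.1 = 0 := rfl
  rw [h, ← AddMonoidAlgebra.one_def]

lemma one_sub_A_mul_B : (1 - archGF S) * B = 1 := by
  have hA0 : PowerSeries.constantCoeff (R := L1) (archGF S) = 0 := by
    rw [← PowerSeries.coeff_zero_eq_constantCoeff, archGF, coeff_mk, archesFin_zero, gfw,
      Finset.sum_empty]
  apply PowerSeries.ext
  intro n
  rw [sub_mul, one_mul, map_sub, PowerSeries.coeff_one]
  rcases Nat.eq_zero_or_pos n with rfl | hn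
  · rw [if_pos rfl]
    simp only [PowerSeries.coeff_zero_eq_constantCoeff, map_mul]
    rw [hA0, zero_mul, sub_zero]
    have := coeff_B_zero hBe
    rwa [PowerSeries.coeff_zero_eq_constantCoeff] at this
  · rw [coeff_AB hBe n hn, hBe n, if_neg (by omega), sub_self]

end Counting

/- ### tuples of arches and powers of A -/

noncomputable def tupFin (S : Finset Pt) : ℕ → ℕ → Finset (List (List Pt))
  | 0, n => if n = 0 then {([] : List (List Pt))} else ∅
  | (k+1), n => (Finset.HasAntidiagonal.antidiagonal n).biUnion fun mm =>
      (archesFin S mm.1 ×ˢ tupFin S k mm.2).image fun q => q.1 :: q.2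

lemma mem_tupFin {S : Finset Pt} : ∀ {k n : ℕ} {L : List (List Pt)},
    L ∈ tupFin S k n ↔
      L.length = k ∧ (∀ a ∈ L, ArchCore a ∧ StepsIn S a) ∧ L.flatten.length = n := by
  intro k
  induction k with
  | zero =>
    intro n L
    rw [tupFin]
    split
    · subst ‹n = 0›
      simp only [Finset.mem_singleton, List.length_eq_zero_iff]
      constructor
      · rintro rfl; simp
      · rintro ⟨rfl, -, -⟩; rfl
    · simp only [Finset.notMem_empty, false_iff]
      rintro ⟨hlen, -, hfl⟩
      rw [List.length_eq_zero_iff.1 hlen] at hfl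
      simp at hfl
      omega
  | succ k ih =>
    intro n L
    rw [tupFin]
    simp only [Finset.mem_biUnion, Finset.mem_image, Finset.mem_product, Finset.HasAntidiagonal.mem_antidiagonal]
    constructor
    · rintro ⟨⟨m1, m2⟩, hmm, ⟨a, T⟩, ⟨ha, hT⟩, rfl⟩
      obtain ⟨ha1, ha2, ha3⟩ := mem_archesFin.1 ha
      obtain ⟨hT1, hT2, hT3⟩ := ih.1 hT
      refine ⟨by simp [hT1], ?_, ?_⟩
      · intro x hx
        rcases List.mem_cons.1 hx with rfl | hx
        · exact ⟨ha3, ha2⟩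
        · exact hT2 x hx
      · simp only [List.flatten_cons, List.length_append, ha1, hT3]
        exact hmm
    · rintro ⟨hlen, harch, hfl⟩
      cases L with
      | nil => simp at hlen
      | cons a T =>
        refine ⟨⟨a.length, T.flatten.length⟩, ?_, ⟨a, T⟩,
          ⟨mem_archesFin.2 ⟨rfl, (harch a (by simp)).2, (harch a (by simp)).1⟩,
            ih.2 ⟨by simpa using hlen, fun x hx => harch x (by simp [hx]), rfl⟩⟩, rfl⟩
      
        simp only [List.flatten_cons, List.length_append] at hfl
        exact hfl

lemma coeff_A_pow (S : Finset Pt) (k : ℕ) : ∀ n,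
    PowerSeries.coeff (R := L1) n (archGF S ^ k) = gfw (tupFin S k n) (fun L => L.flatten.sum.1) := by
  induction k with
  | zero =>
    intro n
    rcases eq_or_ne n 0 with rfl | hn
    · rw [pow_zero, PowerSeries.coeff_one, if_pos rfl, tupFin, if_pos rfl, gfw,
        Finset.sum_singleton]
      have h : ([] : List (List Pt)).flatten.sum.1 = 0 := rfl
      rw [h, ← AddMonoidAlgebra.one_def]
    · rw [pow_zero, PowerSeries.coeff_one, if_neg hn, tupFin, if_neg hn, gfw, Finset.sum_empty]
  | succ k ih =>
    intro n
    rw [pow_succ', PowerSeries.coeff_mul]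
    rw [Finset.sum_congr rfl (fun mm _ => by
      rw [ih, archGF, coeff_mk, gfw_mul] :
        ∀ mm ∈ Finset.HasAntidiagonal.antidiagonal n,
          PowerSeries.coeff (R := L1) mm.1 (archGF S) * PowerSeries.coeff (R := L1) mm.2 (archGF S ^ k)
          = ∑ q ∈ archesFin S mm.1 ×ˢ tupFin S k mm.2,
              AddMonoidAlgebra.single (q.1.sum.1 + q.2.flatten.sum.1) (1:ℚ))]
    rw [Finset.sum_sigma' (Finset.HasAntidiagonal.antidiagonal n)
      (fun mm => archesFin S mm.1 ×ˢ tupFin S k mm.2)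
      (fun _ q => AddMonoidAlgebra.single (q.1.sum.1 + q.2.flatten.sum.1) (1:ℚ)), gfw]
    refine Finset.sum_bij (fun x _ => x.2.1 :: x.2.2) ?_ ?_ ?_ ?_
    · rintro ⟨⟨m1, m2⟩, a, T⟩ hx
      simp only [Finset.mem_sigma, Finset.HasAntidiagonal.mem_antidiagonal, Finset.mem_product] at hx
      obtain ⟨hmm, ha, hT⟩ := hx
      obtain ⟨ha1, ha2, ha3⟩ := mem_archesFin.1 ha
      obtain ⟨hT1, hT2, hT3⟩ := mem_tupFin.1 hT
      refine mem_tupFin.2 ⟨by simp [hT1], ?_, ?_⟩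
      · intro x hx
        rcases List.mem_cons.1 hx with rfl | hx
        · exact ⟨ha3, ha2⟩
        · exact hT2 x hx
      · simp only [List.flatten_cons, List.length_append, ha1, hT3]
        exact hmm
    · rintro ⟨⟨m1, m2⟩, a, T⟩ hx ⟨⟨m1', m2'⟩, a', T'⟩ hy heq
      simp only [Finset.mem_sigma, Finset.HasAntidiagonal.mem_antidiagonal, Finset.mem_product] at hx hy
      obtain ⟨-, ha, hT⟩ := hx
      obtain ⟨-, ha', hT'⟩ := hy
      obtain ⟨rfl, rfl⟩ : a = a' ∧ T = T' :=
        ⟨(List.cons.inj heq).1, (List.cons.inj heq).2⟩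
      have h1 : m1 = m1' := by
        rw [← (mem_archesFin.1 ha).1, ← (mem_archesFin.1 ha').1]
      have h2 : m2 = m2' := by
        rw [← (mem_tupFin.1 hT).2.2, ← (mem_tupFin.1 hT').2.2]
      subst h1; subst h2; rfl
    · intro L hL
      obtain ⟨hL1, hL2, hL3⟩ := mem_tupFin.1 hL
      cases L with
      | nil => simp at hL1
      | cons a T =>
        refine ⟨⟨⟨a.length, T.flatten.length⟩, a, T⟩, ?_, rfl⟩
        simp only [Finset.mem_sigma, Finset.HasAntidiagonal.mem_antidiagonal, Finset.mem_product]
        refine ⟨?_, mem_archesFin.2 ⟨rfl, (hL2 a (by simp)).2, (hL2 a (by simp)).1⟩,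
          mem_tupFin.2 ⟨by simpa using hL1, fun x hx => hL2 x (by simp [hx]), rfl⟩⟩
        simp only [List.flatten_cons, List.length_append] at hL3
        exact hL3
    · rintro ⟨⟨m1, m2⟩, a, T⟩ _
      simp [List.sum_append]


/- ### counting via rotations -/

lemma tupFin_rotate {S : Finset Pt} {k n : ℕ} {L : List (List Pt)}
    (hL : L ∈ tupFin S k n) (r : ℕ) : L.rotate r ∈ tupFin S k n := by
  obtain ⟨h1, h2, h3⟩ := mem_tupFin.1 hL
  refine mem_tupFin.2 ⟨by rw [List.length_rotate, h1], ?_, ?_⟩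
  · intro a ha
    exact h2 a ((List.rotate_perm L r).mem_iff.1 ha)
  · rw [List.length_flatten, ← h3, List.length_flatten]
    exact ((List.rotate_perm L r).map _).sum_eq

lemma flatten_fst_rotate (L : List (List Pt)) (r : ℕ) :
    (L.rotate r).flatten.sum.1 = L.flatten.sum.1 := by
  rw [flatten_fst, flatten_fst]
  exact ((List.rotate_perm L r).map _).sum_eq

lemma rotate_back {L : List (List Pt)} {k r : ℕ} (hlen : L.length = k) (hr : r < k) :
    (L.rotate r).rotate ((k - r) % k) = L := by
  have h1 : (L.rotate r).length = k := by rw [List.length_rotate, hlen]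
  rw [← h1, List.rotate_mod, h1, List.rotate_rotate]
  have : r + (k - r) = k := by omega
  rw [this, ← hlen, List.rotate_length]

lemma mod_sub_inj {k r r' : ℕ} (hr : r < k) (hr' : r' < k)
    (h : (k - r) % k = (k - r') % k) : r = r' := by
  rcases Nat.eq_zero_or_pos r with rfl | hp1 <;> rcases Nat.eq_zero_or_pos r' with rfl | hp2
  · rfl
  · rw [Nat.sub_zero, Nat.mod_self, Nat.mod_eq_of_lt (by omega)] at h
    omega
  · rw [Nat.sub_zero, Nat.mod_self, Nat.mod_eq_of_lt (by omega)] at h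
    omega
  · rw [Nat.mod_eq_of_lt (by omega), Nat.mod_eq_of_lt (by omega)] at h
    omega

lemma card_rotate (S : Finset Pt) {p : ℤ} (hp : 0 < p)
    (hmin : ∀ q : ℤ, 0 < q → (∃ l, StepsIn S l ∧ AvoidsH l ∧ l.sum = (q, 0)) → p ≤ q)
    (k n : ℕ) (hk : 1 ≤ k) :
    ((tupFin S k n).filter (fun L => L.flatten.sum.1 = p)).card
      = k * ((tupFin S k n).filter (fun L => L.flatten.sum.1 = p ∧ Good L)).card := by
  have key : ((Finset.range k) ×ˢ ((tupFin S k n).filter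
      (fun L => L.flatten.sum.1 = p ∧ Good L))).card
      = ((tupFin S k n).filter (fun L => L.flatten.sum.1 = p)).card := by
    apply Finset.card_bij (fun (x : ℕ × List (List Pt)) _ => x.2.rotate x.1)
    · rintro ⟨r, L⟩ hx
      simp only [Finset.mem_product, Finset.mem_range, Finset.mem_filter] at hx
      obtain ⟨hr, hL, hLp, -⟩ := hx
      exact Finset.mem_filter.2 ⟨tupFin_rotate hL r, by rw [flatten_fst_rotate, hLp]⟩
    · rintro ⟨r, L⟩ hx ⟨r', L'⟩ hy heq
      simp only [Finset.mem_product, Finset.mem_range, Finset.mem_filter] at hx hy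
      obtain ⟨hr, hL, hLp, hLg⟩ := hx
      obtain ⟨hr', hL', hLp', hLg'⟩ := hy
      have hlen : L.length = k := (mem_tupFin.1 hL).1
      have hlen' : L'.length = k := (mem_tupFin.1 hL').1
      have hTmem : (L.rotate r) ∈ tupFin S k n := tupFin_rotate hL r
      have hTlen : (L.rotate r).length = k := by rw [List.length_rotate, hlen]
      have harch : ∀ a ∈ L.rotate r, ArchCore a ∧ StepsIn S a :=
        (mem_tupFin.1 hTmem).2.1
      have hTsum : (L.rotate r).flatten.sum.1 = p := by rw [flatten_fst_rotate, hLp]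
      have e1 : (L.rotate r).rotate ((k - r) % k) = L := rotate_back hlen hr
      have e1' : (L.rotate r).rotate ((k - r') % k) = L' := by
        rw [heq]; exact rotate_back hlen' hr'
      have hmod : (k - r) % k = (k - r') % k := by
        apply good_rotation_unique hmin harch hTsum
          (by rw [hTlen]; exact Nat.mod_lt _ (by omega))
          (by rw [hTlen]; exact Nat.mod_lt _ (by omega))
        · rw [e1]; exact hLg
        · rw [e1']; exact hLg'
      have hrr : r = r' := mod_sub_inj hr hr' hmod
      subst hrr
      have : L = L' := by rw [← e1, ← e1']
      rw [this]
    · intro T hT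
      obtain ⟨hTt, hTp⟩ := Finset.mem_filter.1 hT
      have hTlen : T.length = k := (mem_tupFin.1 hTt).1
      have hTne : T ≠ [] := by
        intro h; rw [h] at hTlen; simp at hTlen; omega
      obtain ⟨r0, hr0, hg0⟩ := exists_good_rotation T hTne (by rw [hTp]; exact hp)
      rw [hTlen] at hr0
      refine ⟨⟨(k - r0) % k, T.rotate r0⟩, ?_, rotate_back hTlen hr0⟩
      simp only [Finset.mem_product, Finset.mem_range, Finset.mem_filter]
      exact ⟨Nat.mod_lt _ (by omega), tupFin_rotate hTt r0,
        by rw [flatten_fst_rotate, hTp], hg0⟩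
  rw [← key, Finset.card_product, Finset.card_range]

lemma slit_eq_sum_good (S : Finset Pt) {p : ℤ} (hp : 0 < p) (n : ℕ) :
    ((walksFin S n).filter (fun l => AvoidsH l ∧ l.sum = (p, 0))).card
      = ∑ k ∈ (Finset.range (n+1)).filter (fun k => k ≠ 0),
          ((tupFin S k n).filter (fun L => L.flatten.sum.1 = p ∧ Good L)).card := by
  rw [← Finset.card_sigma]
  symm
  apply Finset.card_bij (fun (x : Σ _ : ℕ, List (List Pt)) _ => x.2.flatten)
  · rintro ⟨k, L⟩ hx
    simp only [Finset.mem_sigma, Finset.mem_filter, Finset.mem_range] at hx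
    obtain ⟨⟨-, hk0⟩, hL, hLp, hLg⟩ := hx
    obtain ⟨h1, h2, h3⟩ := mem_tupFin.1 hL
    refine Finset.mem_filter.2 ⟨mem_walksFin.2 ⟨h3, stepsIn_flatten fun a ha => (h2 a ha).2⟩,
      ?_, ?_⟩
    · rw [avoidsH_iff, avoidsFrom_flatten (fun a ha => (h2 a ha).1) (by rfl)]
      intro j hj1 hj2
      have := hLg j hj1 hj2
      simpa using this
    · exact Prod.ext hLp (flatten_snd fun a ha => (h2 a ha).1.2.2)
  · rintro ⟨k, L⟩ hx ⟨k', L'⟩ hy heq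
    simp only [Finset.mem_sigma, Finset.mem_filter, Finset.mem_range] at hx hy
    obtain ⟨-, hL, -, -⟩ := hx
    obtain ⟨-, hL', -, -⟩ := hy
    have := decomp_unique (fun a ha => ((mem_tupFin.1 hL).2.1 a ha).1)
      (fun a ha => ((mem_tupFin.1 hL').2.1 a ha).1) heq
    subst this
    have : k = k' := by rw [← (mem_tupFin.1 hL).1, ← (mem_tupFin.1 hL').1]
    subst this
    rfl
  · intro c hc
    obtain ⟨hcw, hca, hcs⟩ := Finset.mem_filter.1 hc
    obtain ⟨hc1, hc2⟩ := mem_walksFin.1 hcw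
    have hcne : c ≠ [] := by
      rintro rfl
      rw [List.sum_nil] at hcs
      have : (0 : ℤ) = p := congrArg Prod.fst hcs
      omega
    obtain ⟨L, hL1, hL2, hL3⟩ := exists_decomp c.length c le_rfl hcne hc2
      (by rw [hcs])
    refine ⟨⟨L.length, L⟩, ?_, hL2⟩
    simp only [Finset.mem_sigma, Finset.mem_filter, Finset.mem_range]
    have hkn : L.length ≤ n := by
      have := length_le_flatten_length (fun a ha => (hL1 a ha).1.1)
      rw [hL2, hc1] at this
      exact this
    refine ⟨⟨by omega, by
      intro h
      rw [List.length_eq_zero_iff.1 h] at hL3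
      exact hL3 rfl⟩, mem_tupFin.2 ⟨rfl, hL1, by rw [hL2, hc1]⟩, by rw [hL2, hcs], ?_⟩
    have hav := (avoidsFrom_flatten (fun a ha => (hL1 a ha).1) (q := ((0, 0) : Pt)) rfl).1
      (by rw [hL2]; exact avoidsH_iff.1 hca)
    intro j hj1 hj2
    have := hav j hj1 hj2
    simpa using this


/- ### the logarithm identity -/

lemma derivative_qsmul (q : ℚ) (f : PowerSeries L1) :
    PowerSeries.derivative L1 (q • f) = q • PowerSeries.derivative L1 f := by
  ext m
  rw [PowerSeries.coeff_derivative, PowerSeries.coeff_smul, PowerSeries.coeff_smul,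
    PowerSeries.coeff_derivative, smul_mul_assoc]

lemma coeff_logSeries_eq {B A : PowerSeries L1} (hA : PowerSeries.constantCoeff (R := L1) A = 0)
    (hrel : (1 - A) * B = 1) (n : ℕ) :
    PowerSeries.coeff (R := L1) n (logSeries B) = ∑ k ∈ Finset.range (n + 1),
      if k = 0 then 0 else ((1 : ℚ) / k) • PowerSeries.coeff (R := L1) n (A ^ k) := by
  classical
  set F : PowerSeries L1 := B - 1 with hF
  have hB0 : PowerSeries.constantCoeff (R := L1) B = 1 := by
    have h := congrArg (PowerSeries.constantCoeff (R := L1)) hrel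
    simp only [map_mul, map_sub, map_one, hA, sub_zero, one_mul] at h
    exact h
  have hF0 : PowerSeries.constantCoeff (R := L1) F = 0 := by
    rw [hF, map_sub, map_one, hB0, sub_self]
  have hB1 : B = 1 + F := by rw [hF]; ring
  set D := PowerSeries.derivative L1 with hD
  set LN : PowerSeries L1 := ∑ k ∈ Finset.range (n + 1),
    if k = 0 then 0 else ((-1 : ℚ) ^ (k - 1) / k) • F ^ k with hLN
  set MN : PowerSeries L1 := ∑ k ∈ Finset.range (n + 1),
    if k = 0 then 0 else ((1 : ℚ) / k) • A ^ k with hMN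
  have hcoeffL : PowerSeries.coeff (R := L1) n (logSeries B) = PowerSeries.coeff (R := L1) n LN := by
    rw [logSeries, coeff_mk, hLN, map_sum]
    refine Finset.sum_congr rfl fun k _ => ?_
    split
    · rw [map_zero]
    · rw [PowerSeries.coeff_smul]
  have hcoeffM : ∑ k ∈ Finset.range (n + 1),
      (if k = 0 then 0 else ((1 : ℚ) / k) • PowerSeries.coeff (R := L1) n (A ^ k))
      = PowerSeries.coeff (R := L1) n MN := by
    rw [hMN, map_sum]
    refine Finset.sum_congr rfl fun k _ => ?_
    split
    · rw [map_zero]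
    · rw [PowerSeries.coeff_smul]
  rw [hcoeffL, hcoeffM]
  -- trivial case n = 0
  rcases Nat.eq_zero_or_pos n with rfl | hn
  · simp [hLN, hMN]
  -- derivative computation
  have hDF : D F = D B := by rw [hF, map_sub, Derivation.map_one_eq_zero, sub_zero]
  have hDL : D LN = (∑ j ∈ Finset.range n, (-F) ^ j) * D B := by
    rw [hLN, map_sum]
    have h1 : ∀ k ∈ Finset.range (n + 1),
        D (if k = 0 then 0 else ((-1 : ℚ) ^ (k - 1) / k) • F ^ k)
        = if k = 0 then 0 else (-F) ^ (k - 1) * D B := by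
      intro k _
      split
      · rw [map_zero]
      · rename_i hk
        rw [derivative_qsmul, Derivation.leibniz_pow, smul_eq_mul, ← Nat.cast_smul_eq_nsmul ℚ,
          smul_smul, hDF]
        have hc : (-1 : ℚ) ^ (k - 1) / k * k = (-1 : ℚ) ^ (k - 1) := by
          field_simp
        rw [hc, ← smul_mul_assoc, ← smul_pow, neg_one_smul]
    rw [Finset.sum_congr rfl h1, Finset.sum_range_succ', Finset.sum_mul]
    simp [Nat.add_sub_cancel]
  have hDM : D MN = (∑ j ∈ Finset.range n, A ^ j) * D A := by
    rw [hMN, map_sum]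
    have h1 : ∀ k ∈ Finset.range (n + 1),
        D (if k = 0 then 0 else ((1 : ℚ) / k) • A ^ k)
        = if k = 0 then 0 else A ^ (k - 1) * D A := by
      intro k _
      split
      · rw [map_zero]
      · rename_i hk
        rw [derivative_qsmul, Derivation.leibniz_pow, smul_eq_mul, ← Nat.cast_smul_eq_nsmul ℚ,
          smul_smul]
        have hc : (1 : ℚ) / k * k = 1 := by field_simp
        rw [hc, one_smul]
    rw [Finset.sum_congr rfl h1, Finset.sum_range_succ', Finset.sum_mul]
    simp [Nat.add_sub_cancel]
  have hgeomF : (∑ j ∈ Finset.range n, (-F) ^ j) * B = 1 - (-F) ^ n := by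
    have h2 : (∑ j ∈ Finset.range n, (-F) ^ j) * (-B) = (-F) ^ n - 1 := by
      rw [← geom_sum_mul (-F) n]; congr 1; rw [hB1]; ring
    have h3 := congrArg (fun z => -z) h2
    simp only [← mul_neg, neg_neg, neg_sub] at h3
    exact h3
  have hgeomA : (∑ j ∈ Finset.range n, A ^ j) * (1 - A) = 1 - A ^ n := by
    have h3 := congrArg (fun z => -z) (geom_sum_mul A n)
    simp only [← mul_neg, neg_sub] at h3
    exact h3
  have hBA : B * D A = (1 - A) * D B := by
    have h := congrArg D hrel
    rw [Derivation.leibniz, Derivation.map_one_eq_zero, smul_eq_mul, smul_eq_mul, map_sub,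
      Derivation.map_one_eq_zero, zero_sub, mul_neg] at h
    linear_combination -h
  have hmain : B * (D LN - D MN) = (A ^ n - (-F) ^ n) * D B := by
    rw [mul_sub, hDL, hDM]
    have e1 : B * ((∑ j ∈ Finset.range n, (-F) ^ j) * D B) = (1 - (-F) ^ n) * D B := by
      rw [← mul_assoc, mul_comm B, hgeomF]
    have e2 : B * ((∑ j ∈ Finset.range n, A ^ j) * D A) = (1 - A ^ n) * D B := by
      have h4 : B * ((∑ j ∈ Finset.range n, A ^ j) * D A)
          = (∑ j ∈ Finset.range n, A ^ j) * (B * D A) := by ring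
      rw [h4, hBA, ← mul_assoc, hgeomA]
    rw [e1, e2]; ring
  have hdvd : (X : PowerSeries L1) ^ n ∣ D LN - D MN := by
    have hXA : (X : PowerSeries L1) ∣ A := PowerSeries.X_dvd_iff.2 hA
    have hXF : (X : PowerSeries L1) ∣ -F :=
      PowerSeries.X_dvd_iff.2 (by rw [map_neg, hF0, neg_zero])
    have h1 : (X : PowerSeries L1) ^ n ∣ (A ^ n - (-F) ^ n) * D B :=
      dvd_mul_of_dvd_left (dvd_sub (pow_dvd_pow_of_dvd hXA n) (pow_dvd_pow_of_dvd hXF n)) _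
    have h2 : (X : PowerSeries L1) ^ n ∣ B * (D LN - D MN) := hmain ▸ h1
    have hu : IsUnit B := PowerSeries.isUnit_iff_constantCoeff.2 (by rw [hB0]; exact isUnit_one)
    obtain ⟨C, hC⟩ := hu.exists_left_inv
    rcases h2 with ⟨c, hc⟩
    refine ⟨C * c, ?_⟩
    calc D LN - D MN = C * (B * (D LN - D MN)) := by rw [← mul_assoc, hC, one_mul]
    _ = C * (X ^ n * c) := by rw [hc]
    _ = X ^ n * (C * c) := by ring
  obtain ⟨m, rfl⟩ : ∃ m, n = m + 1 := ⟨n - 1, by omega⟩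
  have h0 : PowerSeries.coeff (R := L1) m (D (LN - MN)) = 0 := by
    rw [map_sub]
    exact PowerSeries.X_pow_dvd_iff.1 hdvd m (by omega)
  rw [PowerSeries.coeff_derivative] at h0
  have h1 : PowerSeries.coeff (R := L1) (m + 1) (LN - MN) = 0 := by
    have h2 : ((m + 1 : ℕ) : ℚ) • PowerSeries.coeff (R := L1) (m + 1) (LN - MN) = 0 := by
      rw [Nat.cast_smul_eq_nsmul, nsmul_eq_mul, mul_comm]
      convert h0 using 2
      push_cast; ring
    have hne : ((m + 1 : ℕ) : ℚ) ≠ 0 := by positivity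
    have h3 := congrArg (fun z => (((m + 1 : ℕ) : ℚ))⁻¹ • z) h2
    simp only [smul_smul, inv_mul_cancel₀ hne, one_smul, smul_zero] at h3
    exact h3
  rw [map_sub, sub_eq_zero] at h1
  exact h1



/-- if `p` is the smallest positive integer such that some walk on the
slit plane with steps in `S` ends at `(p,0)`, then the generating function of walks on
the slit plane ending at `(p,0)` is the coefficient of `x^p` in `log B(x;t)`, where
`B` is the generating function of bilateral walks. -/
theorem statement2 (S : Finset Pt) (p : ℤ) (hp : 0 < p)
    (hex : ∃ l : List Pt, StepsIn S l ∧ AvoidsH l ∧ l.sum = (p, 0))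
    (hmin : ∀ q : ℤ, 0 < q →
      (∃ l : List Pt, StepsIn S l ∧ AvoidsH l ∧ l.sum = (q, 0)) → p ≤ q)
    (B : PowerSeries L1)
    (hB : ∀ (n : ℕ) (i : ℤ),
      (PowerSeries.coeff (R := L1) n B).coeff i = (walkCount S n (i, 0) : ℚ))
    (Sp : PowerSeries ℚ)
    (hSp : ∀ n : ℕ, PowerSeries.coeff (R := ℚ) n Sp = (slitCount S n (p, 0) : ℚ)) :
    Sp = PowerSeries.mk fun n => (PowerSeries.coeff (R := L1) n (logSeries B)).coeff p := by
  have hBe : ∀ n, PowerSeries.coeff (R := L1) n B = gfw (bilatFin S n) (fun l => l.sum.1) := by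
    intro n
    ext i
    rw [hB n i, gfw_apply, walkCount_eq_card]
  have hA0 : PowerSeries.constantCoeff (R := L1) (archGF S) = 0 := by
    rw [← PowerSeries.coeff_zero_eq_constantCoeff, archGF, coeff_mk, archesFin_zero, gfw,
      Finset.sum_empty]
  have hrel := one_sub_A_mul_B hBe
  apply PowerSeries.ext
  intro n
  rw [coeff_mk, hSp n, coeff_logSeries_eq hA0 hrel n, AddMonoidAlgebra.coeff_sum, Finsupp.finset_sum_apply]
  have hterm : ∀ k ∈ Finset.range (n + 1),
      ((if k = 0 then (0 : L1) else ((1 : ℚ) / k) • PowerSeries.coeff (R := L1) n (archGF S ^ k)) : L1).coeff p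
      = (if k = 0 then 0 else
          ((((tupFin S k n).filter (fun L => L.flatten.sum.1 = p ∧ Good L)).card : ℚ))) := by
    intro k _
    rw [apply_ite (fun f : L1 => f.coeff p)]
    split
    · rfl
    · rename_i hk
      rw [AddMonoidAlgebra.coeff_smul, Finsupp.smul_apply, coeff_A_pow, gfw_apply,
        card_rotate S hp hmin k n (by omega), smul_eq_mul]
      push_cast
      rw [one_div, ← mul_assoc, inv_mul_cancel₀ (by positivity : (k : ℚ) ≠ 0), one_mul]
  rw [Finset.sum_congr rfl hterm, slitCount_eq_card, slit_eq_sum_good S hp n]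
  push_cast
  rw [Finset.sum_filter]
  refine Finset.sum_congr rfl fun k _ => ?_
  by_cases hk : k = 0 <;> simp [hk]


end SlitPlane
end

section
/- Let P be a finite set of steps in Z, let R be a commutative ring, and let lambda : P -> R assign a weight to each step; the weight of a walk is the product of the weights of its steps. Suppose some walk with steps in P starting at 0 ends at a positive integer, and let p be the smallest positive integer such that some walk ends at p. Then for every n >= 1, n times the total weight of the n-step walks that start at 0, end at p, and have s_i > 0 for all 1 <= i <= n, equals the coefficient of x^p in the Laurent polynomial (sum_{i in P} lambda_i x^i)^n in R[x,x^{-1}]. -/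
open scoped Classical

namespace SlitPlane

open Finset

/-- Partial sum of the first `k` values of `b`. -/
def Ssum {n : ℕ} (b : Fin n → ℤ) (k : ℕ) : ℤ :=
  ∑ i ∈ Finset.univ.filter (fun i : Fin n => (i : ℕ) < k), b i

lemma Ssum_zero {n : ℕ} (b : Fin n → ℤ) : Ssum b 0 = 0 := by simp [Ssum]

lemma Ssum_succ {n : ℕ} (b : Fin n → ℤ) {k : ℕ} (hk : k < n) :
    Ssum b (k + 1) = Ssum b k + b ⟨k, hk⟩ := by
  unfold Ssum
  have hins : Finset.univ.filter (fun i : Fin n => (i : ℕ) < k + 1)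
      = insert (⟨k, hk⟩ : Fin n) (Finset.univ.filter (fun i : Fin n => (i : ℕ) < k)) := by
    ext i
    simp only [Finset.mem_filter, Finset.mem_insert, Finset.mem_univ, true_and, Fin.ext_iff]
    omega
  rw [hins, Finset.sum_insert (by simp)]
  ring

lemma Ssum_top {n : ℕ} (b : Fin n → ℤ) {k : ℕ} (h : n ≤ k) : Ssum b k = ∑ i, b i := by
  unfold Ssum
  rw [Finset.filter_true_of_mem (fun i _ => lt_of_lt_of_le i.isLt h)]

lemma Ssum_sub {n : ℕ} (b : Fin n → ℤ) {m k : ℕ} (h : m ≤ k) :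
    Ssum b k - Ssum b m
      = ∑ i ∈ Finset.univ.filter (fun i : Fin n => m ≤ (i : ℕ) ∧ (i : ℕ) < k), b i := by
  have hsplit : Finset.univ.filter (fun i : Fin n => (i : ℕ) < k)
      = Finset.univ.filter (fun i : Fin n => (i : ℕ) < m)
        ∪ Finset.univ.filter (fun i : Fin n => m ≤ (i : ℕ) ∧ (i : ℕ) < k) := by
    ext i
    simp only [Finset.mem_filter, Finset.mem_union, Finset.mem_univ, true_and]
    omega
  have hdisj : Disjoint (Finset.univ.filter (fun i : Fin n => (i : ℕ) < m))
      (Finset.univ.filter (fun i : Fin n => m ≤ (i : ℕ) ∧ (i : ℕ) < k)) := by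
    rw [Finset.disjoint_left]
    intro i hi hi'
    simp only [Finset.mem_filter, Finset.mem_univ, true_and] at hi hi'
    omega
  unfold Ssum
  rw [hsplit, Finset.sum_union hdisj]
  ring

lemma Ssum_rot {n : ℕ} [NeZero n] (c : Fin n → ℤ) (j : Fin n) {k : ℕ} (hk : k ≤ n) :
    Ssum (fun i => c (i + j)) k =
      if (j : ℕ) + k ≤ n then Ssum c ((j : ℕ) + k) - Ssum c j
      else Ssum c n - Ssum c j + Ssum c ((j : ℕ) + k - n) := by
  induction k with
  | zero =>
      rw [if_pos (by omega : (j : ℕ) + 0 ≤ n)]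
      simp [Ssum_zero]
  | succ k ih =>
      have hkn : k < n := hk
      have hjn : (j : ℕ) < n := j.isLt
      rw [Ssum_succ _ hkn, ih (le_of_lt hkn)]
      simp only [Nat.add_succ]
      have hval : ((⟨k, hkn⟩ + j : Fin n) : ℕ) = (k + (j : ℕ)) % n := by
        simp [Fin.add_def]
      by_cases h1 : (j : ℕ) + k + 1 ≤ n
      · have hlt : k + (j : ℕ) < n := by omega
        have hidx : (⟨k, hkn⟩ + j : Fin n) = ⟨(j : ℕ) + k, by omega⟩ := by
          apply Fin.ext
          simp only [hval, Fin.val_mk]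
          rw [Nat.mod_eq_of_lt hlt]
          omega
        rw [if_pos (by omega : (j : ℕ) + k ≤ n), if_pos h1, hidx,
          Ssum_succ c (show (j : ℕ) + k < n by omega)]
        ring
      · by_cases h2 : (j : ℕ) + k ≤ n
        · have hjk : (j : ℕ) + k = n := by omega
          have hidx : (⟨k, hkn⟩ + j : Fin n) = ⟨0, Nat.pos_of_ne_zero (NeZero.ne n)⟩ := by
            apply Fin.ext
            simp only [hval, Fin.val_mk]
            rw [show k + (j : ℕ) = n by omega, Nat.mod_self]
          rw [if_pos h2, if_neg h1, hidx, hjk,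
            show Nat.succ n - n = 0 + 1 by omega,
            Ssum_succ c (Nat.pos_of_ne_zero (NeZero.ne n)), Ssum_zero]
          ring
        · have hidx : (⟨k, hkn⟩ + j : Fin n) = ⟨(j : ℕ) + k - n, by omega⟩ := by
            apply Fin.ext
            simp only [hval, Fin.val_mk]
            rw [Nat.mod_eq_sub_mod (by omega), Nat.mod_eq_of_lt (by omega)]
            omega
          rw [if_neg h2, if_neg h1, hidx,
            show Nat.succ ((j : ℕ) + k) - n = ((j : ℕ) + k - n) + 1 by omega,
            Ssum_succ c (show (j : ℕ) + k - n < n by omega)]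
          ring

/-- Any finset of steps of a walk, if its sum is positive, sums to at least `p`. -/
lemma seg_ge (P : Finset ℤ) (p : ℤ)
    (hmin : ∀ q : ℤ, 0 < q → (∃ l : List ℤ, (∀ s ∈ l, s ∈ P) ∧ l.sum = q) → p ≤ q)
    {n : ℕ} (f : Fin n → P) (s : Finset (Fin n))
    (hs : 0 < ∑ i ∈ s, ((f i : ℤ))) : p ≤ ∑ i ∈ s, ((f i : ℤ)) := by
  refine hmin _ hs ⟨(s.val.map (fun i => ((f i : ℤ)))).toList, ?_, ?_⟩
  · intro x hx
    rw [Multiset.mem_toList, Multiset.mem_map] at hx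
    obtain ⟨i, -, rfl⟩ := hx
    exact (f i).2
  · rw [Multiset.sum_toList]
    rfl

/-- Cycle lemma: a walk summing to the minimal positive reachable value `p` has a
unique rotation all of whose partial sums are positive. -/
lemma exists_unique_rot (P : Finset ℤ) (p : ℤ) (hp : 0 < p)
    (hmin : ∀ q : ℤ, 0 < q → (∃ l : List ℤ, (∀ s ∈ l, s ∈ P) ∧ l.sum = q) → p ≤ q)
    {n : ℕ} [NeZero n] (f : Fin n → P) (hf : (∑ i : Fin n, ((f i : ℤ))) = p) :
    ∃! j : Fin n, ∀ k : ℕ, 1 ≤ k → k ≤ n →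
      0 < Ssum (fun i => ((f (i + j) : ℤ))) k := by
  have h0n : 0 < n := Nat.pos_of_ne_zero (NeZero.ne n)
  have hSn : Ssum (fun i => ((f i : ℤ))) n = p := by
    rw [Ssum_top _ le_rfl]; exact hf
  -- uniqueness claim
  have hclaim : ∀ a b : Fin n, (a : ℕ) < (b : ℕ) →
      (∀ k : ℕ, 1 ≤ k → k ≤ n → 0 < Ssum (fun i => ((f (i + a) : ℤ))) k) →
      (∀ k : ℕ, 1 ≤ k → k ≤ n → 0 < Ssum (fun i => ((f (i + b) : ℤ))) k) → False := by
    intro a b hab ha hb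
    have hbn : (b : ℕ) < n := b.isLt
    have h1 := ha ((b : ℕ) - (a : ℕ)) (by omega) (by omega)
    rw [Ssum_rot (fun i => ((f i : ℤ))) a (by omega),
      if_pos (show (a : ℕ) + ((b : ℕ) - (a : ℕ)) ≤ n by omega),
      show (a : ℕ) + ((b : ℕ) - (a : ℕ)) = (b : ℕ) by omega] at h1
    -- h1 : 0 < S b - S a
    have hseg2 : p ≤ Ssum (fun i => ((f i : ℤ))) (b : ℕ) - Ssum (fun i => ((f i : ℤ))) (a : ℕ) := by
      rw [Ssum_sub _ (le_of_lt hab)]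
      apply seg_ge P p hmin f
      rw [← Ssum_sub _ (le_of_lt hab)]
      exact h1
    have h2 := hb (n - (b : ℕ) + (a : ℕ)) (by omega) (by omega)
    rw [Ssum_rot (fun i => ((f i : ℤ))) b (by omega)] at h2
    by_cases ha0 : (a : ℕ) = 0
    · rw [if_pos (show (b : ℕ) + (n - (b : ℕ) + (a : ℕ)) ≤ n by omega),
        show (b : ℕ) + (n - (b : ℕ) + (a : ℕ)) = n by omega, hSn] at h2
      -- h2 : 0 < p - S b
      have hza : Ssum (fun i => ((f i : ℤ))) (a : ℕ) = 0 := by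
        rw [ha0, Ssum_zero]
      linarith
    · rw [if_neg (show ¬ (b : ℕ) + (n - (b : ℕ) + (a : ℕ)) ≤ n by omega),
        show (b : ℕ) + (n - (b : ℕ) + (a : ℕ)) - n = (a : ℕ) by omega, hSn] at h2
      -- h2 : 0 < p - S b + S a
      linarith
  -- existence: last argmin of the partial sums over [0, n)
  obtain ⟨j0, hj0mem, hj0min⟩ := Finset.exists_min_image (Finset.range n)
    (fun k => Ssum (fun i => ((f i : ℤ))) k) ⟨0, Finset.mem_range.mpr h0n⟩
  set t := (Finset.range n).filter
    (fun k => Ssum (fun i => ((f i : ℤ))) k ≤ Ssum (fun i => ((f i : ℤ))) j0) with ht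
  have htne : t.Nonempty := ⟨j0, by simp [ht, Finset.mem_filter, hj0mem]⟩
  set j1 := t.max' htne with hj1
  have hj1mem : j1 ∈ t := t.max'_mem htne
  have hj1le : Ssum (fun i => ((f i : ℤ))) j1 ≤ Ssum (fun i => ((f i : ℤ))) j0 :=
    (Finset.mem_filter.mp hj1mem).2
  have hj1n : j1 < n := Finset.mem_range.mp (Finset.mem_filter.mp hj1mem).1
  have hj1min : ∀ m, m < n → Ssum (fun i => ((f i : ℤ))) j1 ≤ Ssum (fun i => ((f i : ℤ))) m := by
    intro m hm
    exact hj1le.trans (hj0min m (Finset.mem_range.mpr hm))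
  have hj1last : ∀ m, j1 < m → m < n →
      Ssum (fun i => ((f i : ℤ))) j1 < Ssum (fun i => ((f i : ℤ))) m := by
    intro m hjm hm
    by_contra h
    push_neg at h
    have hmt : m ∈ t := Finset.mem_filter.mpr ⟨Finset.mem_range.mpr hm, le_trans h hj1le⟩
    have := Finset.le_max' t m hmt
    omega
  have hj1le0 : Ssum (fun i => ((f i : ℤ))) j1 ≤ 0 := by
    have := hj1min 0 h0n
    rwa [Ssum_zero] at this
  have hj1lastn : ∀ m, j1 < m → m ≤ n →
      Ssum (fun i => ((f i : ℤ))) j1 < Ssum (fun i => ((f i : ℤ))) m := by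
    intro m hjm hm
    rcases eq_or_lt_of_le hm with rfl | h
    · rw [hSn]; linarith
    · exact hj1last m hjm h
  refine ⟨⟨j1, hj1n⟩, ?_, ?_⟩
  · intro k hk1 hkn
    rw [Ssum_rot (fun i => ((f i : ℤ))) ⟨j1, hj1n⟩ hkn]
    simp only [Fin.val_mk]
    split_ifs with hcase
    · exact sub_pos.mpr (hj1lastn (j1 + k) (by omega) hcase)
    · have hle : Ssum (fun i => ((f i : ℤ))) j1 ≤ Ssum (fun i => ((f i : ℤ))) (j1 + k - n) :=
        hj1min _ (by omega)
      rw [hSn]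
      linarith
  · intro y hy
    have hj1pos : ∀ k : ℕ, 1 ≤ k → k ≤ n →
        0 < Ssum (fun i => ((f (i + (⟨j1, hj1n⟩ : Fin n)) : ℤ))) k := by
      intro k hk1 hkn
      rw [Ssum_rot (fun i => ((f i : ℤ))) ⟨j1, hj1n⟩ hkn]
      simp only [Fin.val_mk]
      split_ifs with hcase
      · exact sub_pos.mpr (hj1lastn (j1 + k) (by omega) hcase)
      · have hle : Ssum (fun i => ((f i : ℤ))) j1 ≤ Ssum (fun i => ((f i : ℤ))) (j1 + k - n) :=
          hj1min _ (by omega)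
        rw [hSn]
        linarith
    rcases Nat.lt_trichotomy (y : ℕ) j1 with h | h | h
    · exact absurd (hclaim y ⟨j1, hj1n⟩ h hy hj1pos) (fun hF => hF)
    · exact Fin.ext h
    · exact absurd (hclaim ⟨j1, hj1n⟩ y h hj1pos hy) (fun hF => hF)


/-- Total weight of the `n`-step walks on `ℤ` with steps in `P`, starting at `0`,
staying positive after the start (`s_k > 0` for `1 ≤ k ≤ n`), and ending at `p`.
A walk is encoded by its sequence of steps `f : Fin n → P`; its weight is the
product of the weights of its steps, and the partial sum after `k` steps is
`∑_{i < k} f i`. -/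
noncomputable def posWalkWeight (R : Type*) [CommRing R] (P : Finset ℤ)
    (lam : ℤ → R) (n : ℕ) (p : ℤ) : R :=
  ∑ f : Fin n → P,
    if (∀ k : ℕ, 1 ≤ k → k ≤ n →
          0 < ∑ i ∈ Finset.univ.filter (fun i : Fin n => (i : ℕ) < k), ((f i : ℤ)))
        ∧ (∑ i : Fin n, ((f i : ℤ))) = p
    then ∏ i : Fin n, lam (f i) else 0

/-- one-dimensional cycle lemma: if `p` is the smallest positive
endpoint of a walk with steps in `P`, then `n` times the total weight of the `n`-step
walks from `0` to `p` that stay positive after the start equals the coefficient of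
`x^p` in `(∑_{i ∈ P} λ_i x^i)^n`. -/
theorem statement3 (R : Type*) [CommRing R] (P : Finset ℤ) (lam : ℤ → R)
    (p : ℤ) (hp : 0 < p)
    (hex : ∃ l : List ℤ, (∀ s ∈ l, s ∈ P) ∧ l.sum = p)
    (hmin : ∀ q : ℤ, 0 < q → (∃ l : List ℤ, (∀ s ∈ l, s ∈ P) ∧ l.sum = q) → p ≤ q)
    (n : ℕ) (hn : 1 ≤ n) :
    n • posWalkWeight R P lam n p
      = ((∑ i ∈ P, AddMonoidAlgebra.single i (lam i) : AddMonoidAlgebra R ℤ) ^ n).coeff p := by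
  haveI : NeZero n := ⟨by omega⟩
  -- Step 1: the coefficient of x^p in the n-th power is the total weight of
  -- all n-step walks ending at p.
  have hRHS : ((∑ i ∈ P, AddMonoidAlgebra.single i (lam i) : AddMonoidAlgebra R ℤ) ^ n).coeff p
      = ∑ f : Fin n → P,
          if (∑ i : Fin n, ((f i : ℤ))) = p then ∏ i : Fin n, lam ((f i : ℤ)) else 0 := by
    rw [← Finset.sum_coe_sort P (fun i => (AddMonoidAlgebra.single i (lam i) : AddMonoidAlgebra R ℤ))]
    rw [show ((∑ i : P, (AddMonoidAlgebra.single (i : ℤ) (lam i) : AddMonoidAlgebra R ℤ)) ^ n)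
        = ∏ _k : Fin n, (∑ i : P, (AddMonoidAlgebra.single (i : ℤ) (lam i) : AddMonoidAlgebra R ℤ)) by
      rw [Finset.prod_const, Finset.card_univ, Fintype.card_fin]]
    rw [show (∏ _k : Fin n, (∑ i : P, (AddMonoidAlgebra.single (i : ℤ) (lam i) : AddMonoidAlgebra R ℤ)))
        = ∑ f : Fin n → P, ∏ k : Fin n,
            (AddMonoidAlgebra.single ((f k : ℤ)) (lam (f k)) : AddMonoidAlgebra R ℤ) by
      rw [Finset.prod_univ_sum (fun _ : Fin n => (Finset.univ : Finset P))
        (fun _ i => (AddMonoidAlgebra.single (i : ℤ) (lam i) : AddMonoidAlgebra R ℤ)),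
        Fintype.piFinset_univ]]
    rw [AddMonoidAlgebra.coeff_sum, Finset.sum_apply']
    refine Finset.sum_congr rfl (fun f _ => ?_)
    rw [AddMonoidAlgebra.prod_single]
    exact AddMonoidAlgebra.coeff_single_apply
  rw [hRHS]
  -- Step 2: split each walk's weight over the unique positive rotation.
  have hmid : ∀ f : Fin n → P,
      (if (∑ i : Fin n, ((f i : ℤ))) = p then ∏ i : Fin n, lam ((f i : ℤ)) else 0)
      = ∑ j : Fin n,
          (if (∀ k : ℕ, 1 ≤ k → k ≤ n → 0 < Ssum (fun i => ((f (i + j) : ℤ))) k)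
              ∧ (∑ i : Fin n, ((f (i + j) : ℤ))) = p
            then ∏ i : Fin n, lam ((f (i + j) : ℤ)) else 0) := by
    intro f
    have hsum : ∀ j : Fin n, (∑ i : Fin n, ((f (i + j) : ℤ))) = ∑ i : Fin n, ((f i : ℤ)) :=
      fun j => Fintype.sum_equiv (Equiv.addRight j) _ _ (fun i => rfl)
    have hprod : ∀ j : Fin n, (∏ i : Fin n, lam ((f (i + j) : ℤ))) = ∏ i : Fin n, lam ((f i : ℤ)) :=
      fun j => Fintype.prod_equiv (Equiv.addRight j) _ _ (fun i => rfl)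
    by_cases hf : (∑ i : Fin n, ((f i : ℤ))) = p
    · rw [if_pos hf]
      obtain ⟨j0, hj0, huniq⟩ := exists_unique_rot P p hp hmin f hf
      have hterm : ∀ j : Fin n,
          (if (∀ k : ℕ, 1 ≤ k → k ≤ n → 0 < Ssum (fun i => ((f (i + j) : ℤ))) k)
              ∧ (∑ i : Fin n, ((f (i + j) : ℤ))) = p
            then ∏ i : Fin n, lam ((f (i + j) : ℤ)) else 0)
          = if j = j0 then ∏ i : Fin n, lam ((f i : ℤ)) else 0 := by
        intro j
        by_cases hj : (∀ k : ℕ, 1 ≤ k → k ≤ n → 0 < Ssum (fun i => ((f (i + j) : ℤ))) k)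
        · rw [if_pos ⟨hj, (hsum j).trans hf⟩, if_pos (huniq j hj), hprod j]
        · have hne : j ≠ j0 := fun h => hj (h ▸ hj0)
          rw [if_neg (fun hcon => hj hcon.1), if_neg hne]
      rw [Finset.sum_congr rfl (fun j _ => hterm j), Finset.sum_ite_eq' Finset.univ j0,
        if_pos (Finset.mem_univ j0)]
    · rw [if_neg hf]
      symm
      apply Finset.sum_eq_zero
      intro j _
      rw [if_neg]
      intro hcon
      exact hf ((hsum j).symm.trans hcon.2)
  rw [Finset.sum_congr rfl (fun f _ => hmid f), Finset.sum_comm]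
  -- Step 3: for each rotation amount, reindex walks to get `posWalkWeight`.
  have hinner : ∀ j : Fin n,
      (∑ f : Fin n → P,
        if (∀ k : ℕ, 1 ≤ k → k ≤ n → 0 < Ssum (fun i => ((f (i + j) : ℤ))) k)
            ∧ (∑ i : Fin n, ((f (i + j) : ℤ))) = p
          then ∏ i : Fin n, lam ((f (i + j) : ℤ)) else 0)
      = posWalkWeight R P lam n p := by
    intro j
    have hbij : Function.Bijective (fun (f : Fin n → P) => (fun i => f (i + j))) := by
      constructor
      · intro f g hfg
        funext i
        have := congrFun hfg (i - j)
        simpa [sub_add_cancel] using this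
      · intro g
        refine ⟨fun i => g (i - j), ?_⟩
        funext i
        simp [add_sub_cancel_right]
    rw [posWalkWeight]
    exact Fintype.sum_bijective _ hbij _ _ (fun f => rfl)
  rw [Finset.sum_congr rfl (fun j _ => hinner j), Finset.sum_const, Finset.card_univ,
    Fintype.card_fin]


end SlitPlane
end

section
/- On the diagonal square lattice with steps {(1,1),(1,-1),(-1,1),(-1,-1)}, let B(x;t,v) in Q[x,x^{-1},v][[t]] be the generating function for bilateral walks, where t marks the length, x the abscissa of the endpoint, and v the number of steps in {(1,1),(-1,-1)}. Then B(x;t,v)^2 * (1 - 4 t^2 (v + x^2)(v + x^{-2})) = 1. -/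
open scoped Classical
open PowerSeries

namespace SlitPlane

/-- The coefficient ring `ℚ[x, x⁻¹, v]`: monomial `(i, m)` stands for `x^i v^m`. -/
abbrev A0 := AddMonoidAlgebra ℚ (ℤ × ℕ)

/-- The monomial `x²`. -/
noncomputable def x2A : A0 := AddMonoidAlgebra.single ((2 : ℤ), (0 : ℕ)) 1

/-- The monomial `x⁻²`. -/
noncomputable def xinv2A : A0 := AddMonoidAlgebra.single ((-2 : ℤ), (0 : ℕ)) 1

/-- The monomial `v`. -/
noncomputable def vA : A0 := AddMonoidAlgebra.single ((0 : ℤ), (1 : ℕ)) 1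

/-- The steps of the diagonal square lattice. -/
def Sdiag : Finset Pt := {(1, 1), (1, -1), (-1, 1), (-1, -1)}

/-- Number of bilateral walks on the diagonal lattice of length `n` ending at `(i,0)`
with exactly `m` steps in `{(1,1), (-1,-1)}`. -/
noncomputable def bilatCount (n : ℕ) (i : ℤ) (m : ℕ) : ℕ :=
  Set.ncard {l : List Pt | l.length = n ∧ StepsIn Sdiag l ∧ l.sum = (i, 0) ∧
    l.countP (fun s => s = (1, 1) ∨ s = (-1, -1)) = m}

noncomputable def cb (j : ℕ) : ℚ := (Nat.centralBinom j : ℚ)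

noncomputable def Sconv (k : ℕ) : ℚ := ∑ j ∈ Finset.range (k+1), cb j * cb (k - j)

lemma cb_rec (i : ℕ) : ((i : ℚ) + 1) * cb (i+1) = (4 * i + 2) * cb i := by
  have := Nat.succ_mul_centralBinom_succ i
  have h : ((i+1) * Nat.centralBinom (i+1) : ℚ) = (2 * (2*i+1) * Nat.centralBinom i : ℚ) := by
    exact_mod_cast congrArg (Nat.cast : ℕ → ℚ) this
  push_cast at h
  unfold cb; linarith

lemma Uconv (k : ℕ) :
    2 * (∑ j ∈ Finset.range (k+1), (j : ℚ) * (cb j * cb (k - j))) = k * Sconv k := by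
  have hr := Finset.sum_range_reflect (fun j => (j : ℚ) * (cb j * cb (k - j))) (k+1)
  have : ∑ j ∈ Finset.range (k+1), (j : ℚ) * (cb j * cb (k - j))
      = ∑ j ∈ Finset.range (k+1), ((k : ℚ) - j) * (cb j * cb (k - j)) := by
    rw [← hr]
    apply Finset.sum_congr rfl
    intro j hj
    rw [Finset.mem_range] at hj
    have hjk : j ≤ k := Nat.lt_succ_iff.mp hj
    have h1 : k + 1 - 1 - j = k - j := by omega
    have h2 : k - (k - j) = j := by omega
    rw [h1, h2]
    have : ((k - j : ℕ) : ℚ) = (k : ℚ) - j := by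
      rw [Nat.cast_sub hjk]
    rw [this]; ring
  rw [two_mul]
  nth_rewrite 2 [this]
  rw [← Finset.sum_add_distrib]
  unfold Sconv
  rw [Finset.mul_sum]
  apply Finset.sum_congr rfl
  intro j _; ring

lemma Sconv_succ (k : ℕ) : Sconv (k+1) = 4 * Sconv k := by
  have hU1 := Uconv (k+1)
  have hU0 := Uconv k
  have hshift : ∑ j ∈ Finset.range (k+2), (j : ℚ) * (cb j * cb (k + 1 - j))
      = ∑ i ∈ Finset.range (k+1), ((i : ℚ) + 1) * (cb (i+1) * cb (k - i)) := by
    rw [Finset.sum_range_succ' (fun j => (j : ℚ) * (cb j * cb (k + 1 - j))) (k+1)]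
    simp only [Nat.cast_zero, zero_mul, add_zero]
    apply Finset.sum_congr rfl
    intro i _
    have : k + 1 - (i + 1) = k - i := by omega
    rw [this]; push_cast; ring
  have hrec : ∑ i ∈ Finset.range (k+1), ((i : ℚ) + 1) * (cb (i+1) * cb (k - i))
      = 4 * (∑ j ∈ Finset.range (k+1), (j : ℚ) * (cb j * cb (k - j))) + 2 * Sconv k := by
    unfold Sconv
    rw [Finset.mul_sum, Finset.mul_sum, ← Finset.sum_add_distrib]
    apply Finset.sum_congr rfl
    intro i _
    have := cb_rec i
    calc ((i : ℚ) + 1) * (cb (i+1) * cb (k - i)) = (((i:ℚ)+1) * cb (i+1)) * cb (k - i) := by ring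
    _ = ((4 * i + 2) * cb i) * cb (k - i) := by rw [this]
    _ = 4 * ((i:ℚ) * (cb i * cb (k - i))) + 2 * (cb i * cb (k - i)) := by ring
  have key : ((k : ℚ) + 1) * Sconv (k+1) = 4 * ((k : ℚ) + 1) * Sconv k := by
    have := hU1
    push_cast at this
    rw [hshift, hrec] at this
    -- this : 2 * (4 * U k + 2 * Sconv k) = (k+1) * Sconv (k+1)
    -- hU0 : 2 * U k = k * Sconv k
    nlinarith [hU0]
  have hk : ((k : ℚ) + 1) ≠ 0 := by positivity
  field_simp at key
  rcases mul_left_cancel₀ hk (by rw [key] : ((k:ℚ)+1) * Sconv (k+1) = ((k:ℚ)+1) * (4 * Sconv k)) with h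
  linarith [h]

lemma Sconv_eq (k : ℕ) : Sconv k = 4 ^ k := by
  induction k with
  | zero => simp [Sconv, cb, Nat.centralBinom]
  | succ k ih => rw [Sconv_succ, ih]; ring


abbrev R3 := AddMonoidAlgebra ℚ (ℤ × ℤ × ℕ)

noncomputable def stepSig (s : Pt) : ℤ × ℤ × ℕ :=
  (s.1, s.2, if s = (1,1) ∨ s = (-1,-1) then 1 else 0)

noncomputable def sig (l : List Pt) : ℤ × ℤ × ℕ :=
  (l.sum.1, l.sum.2, l.countP (fun s => s = (1, 1) ∨ s = (-1, -1)))

lemma sig_nil : sig [] = 0 := rfl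

lemma sig_cons (s : Pt) (l : List Pt) : sig (s :: l) = stepSig s + sig l := by
  unfold sig stepSig
  have hc : (s :: l).countP (fun s => s = (1, 1) ∨ s = (-1, -1))
      = (if s = (1,1) ∨ s = (-1,-1) then 1 else 0) + l.countP (fun s => s = (1, 1) ∨ s = (-1, -1)) := by
    rw [List.countP_cons]
    by_cases h : s = (1,1) ∨ s = (-1,-1) <;> simp [h] <;> try omega
  refine Prod.ext (by simp) (Prod.ext (by simp) ?_)
  simpa using hc

noncomputable def W : R3 := ∑ s ∈ Sdiag, AddMonoidAlgebra.single (stepSig s) (1 : ℚ)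

noncomputable def Ln : ℕ → Finset (List Pt)
  | 0 => {[]}
  | n+1 => (Sdiag ×ˢ Ln n).image (fun p => p.1 :: p.2)

lemma mem_Ln (n : ℕ) (l : List Pt) : l ∈ Ln n ↔ l.length = n ∧ StepsIn Sdiag l := by
  induction n generalizing l with
  | zero =>
    simp only [Ln, Finset.mem_singleton]
    constructor
    · rintro rfl; exact ⟨rfl, by intro s h; simp at h⟩
    · rintro ⟨h, _⟩; exact List.length_eq_zero_iff.mp h
  | succ n ih =>
    simp only [Ln, Finset.mem_image, Finset.mem_product]
    constructor
    · rintro ⟨⟨s, t⟩, ⟨hs, ht⟩, rfl⟩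
      obtain ⟨hlen, hsteps⟩ := (ih t).mp ht
      refine ⟨by simp [hlen], ?_⟩
      intro a ha
      rcases List.mem_cons.mp ha with rfl | ha
      · exact hs
      · exact hsteps a ha
    · rintro ⟨hlen, hsteps⟩
      cases l with
      | nil => simp at hlen
      | cons s t =>
        refine ⟨(s, t), ⟨hsteps s (by simp), (ih t).mpr ⟨by simpa using hlen, ?_⟩⟩, rfl⟩
        intro a ha; exact hsteps a (List.mem_cons_of_mem _ ha)

lemma W_pow (n : ℕ) : W ^ n = ∑ l ∈ Ln n, AddMonoidAlgebra.single (sig l) (1 : ℚ) := by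
  induction n with
  | zero => simp [Ln, sig_nil]; rfl
  | succ n ih =>
    have himg : Ln (n+1) = (Sdiag ×ˢ Ln n).image (fun p => p.1 :: p.2) := rfl
    rw [pow_succ, mul_comm, ih, himg,
      Finset.sum_image (by intro p _ q _ h; simpa [Prod.ext_iff] using h),
      Finset.sum_product]
    unfold W
    rw [Finset.sum_mul]
    apply Finset.sum_congr rfl
    intro s _
    rw [Finset.mul_sum]
    apply Finset.sum_congr rfl
    intro l _
    rw [AddMonoidAlgebra.single_mul_single, sig_cons, one_mul]

lemma W_pow_apply (n : ℕ) (p : ℤ × ℤ × ℕ) :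
    (W ^ n).coeff p = (((Ln n).filter (fun l => sig l = p)).card : ℚ) := by
  rw [W_pow]
  rw [AddMonoidAlgebra.coeff_sum, Finsupp.finset_sum_apply]
  rw [Finset.card_filter]
  push_cast
  apply Finset.sum_congr rfl
  intro l _
  rw [AddMonoidAlgebra.coeff_single, Finsupp.single_apply]

lemma bilatCount_eq (n : ℕ) (i : ℤ) (m : ℕ) :
    (bilatCount n i m : ℚ) = (W ^ n).coeff (i, 0, m) := by
  rw [W_pow_apply]
  congr 1
  unfold bilatCount
  rw [show {l : List Pt | l.length = n ∧ StepsIn Sdiag l ∧ l.sum = (i, 0) ∧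
      l.countP (fun s => s = (1, 1) ∨ s = (-1, -1)) = m}
    = ((Ln n).filter (fun l => sig l = (i, 0, m)) : Finset (List Pt)) from ?_,
    Set.ncard_coe_finset]
  ext l
  simp only [Finset.coe_filter, Set.mem_setOf_eq, mem_Ln, sig, Prod.ext_iff]
  tauto

noncomputable def a0 : AddMonoidAlgebra ℚ (ℤ × ℕ) :=
  AddMonoidAlgebra.single ((1 : ℤ), (1 : ℕ)) 1 + AddMonoidAlgebra.single ((-1 : ℤ), (0 : ℕ)) 1

noncomputable def b0 : AddMonoidAlgebra ℚ (ℤ × ℕ) :=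
  AddMonoidAlgebra.single ((1 : ℤ), (0 : ℕ)) 1 + AddMonoidAlgebra.single ((-1 : ℤ), (1 : ℕ)) 1

def eMap : ℤ × ℕ →+ ℤ × ℤ × ℕ where
  toFun p := (p.1, 0, p.2)
  map_zero' := rfl
  map_add' p q := by simp [Prod.ext_iff]

lemma eMap_inj : Function.Injective eMap := by
  intro p q h
  have h1 := congrArg Prod.fst h
  have h2 := congrArg (fun r => r.2.2) h
  simp [eMap] at h1 h2
  exact Prod.ext h1 h2

noncomputable def iota : AddMonoidAlgebra ℚ (ℤ × ℕ) →+* R3 :=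
  AddMonoidAlgebra.mapDomainRingHom ℚ eMap

lemma iota_single (p : ℤ × ℕ) (r : ℚ) :
    iota (AddMonoidAlgebra.single p r) = AddMonoidAlgebra.single (eMap p) r := by
  simp [iota, AddMonoidAlgebra.mapDomainRingHom, Finsupp.mapDomain_single]

lemma iota_apply_e (c : AddMonoidAlgebra ℚ (ℤ × ℕ)) (p : ℤ × ℕ) :
    (iota c).coeff (eMap p) = c.coeff p :=
  Finsupp.mapDomain_apply eMap_inj c.coeff p

lemma iota_apply_ne (c : AddMonoidAlgebra ℚ (ℤ × ℕ)) (q : ℤ × ℤ × ℕ) (h : q.2.1 ≠ 0) :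
    (iota c).coeff q = 0 := by
  show Finsupp.mapDomain eMap c.coeff q = 0
  apply Finsupp.mapDomain_notin_range
  rintro ⟨p, rfl⟩
  exact h rfl

noncomputable def Y : R3 := AddMonoidAlgebra.single ((0 : ℤ), (1 : ℤ), (0 : ℕ)) 1
noncomputable def Yi : R3 := AddMonoidAlgebra.single ((0 : ℤ), (-1 : ℤ), (0 : ℕ)) 1

lemma W_eq : W = Y * iota a0 + Yi * iota b0 := by
  unfold W Sdiag
  rw [show ({(1, 1), (1, -1), (-1, 1), (-1, -1)} : Finset Pt)
    = insert ((1:ℤ),(1:ℤ)) (insert ((1:ℤ),(-1:ℤ)) (insert ((-1:ℤ),(1:ℤ)) {((-1:ℤ),(-1:ℤ))})) from rfl]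
  rw [Finset.sum_insert (by decide), Finset.sum_insert (by decide),
    Finset.sum_insert (by decide), Finset.sum_singleton]
  unfold a0 b0 Y Yi
  rw [map_add, map_add, iota_single, iota_single, iota_single, iota_single,
    mul_add, mul_add, AddMonoidAlgebra.single_mul_single, AddMonoidAlgebra.single_mul_single,
    AddMonoidAlgebra.single_mul_single, AddMonoidAlgebra.single_mul_single]
  unfold stepSig eMap
  norm_num
  abel

lemma Y_pow (j : ℕ) : Y ^ j = AddMonoidAlgebra.single ((0 : ℤ), (j : ℤ), (0 : ℕ)) 1 := by
  unfold Y
  rw [AddMonoidAlgebra.single_pow]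
  norm_num [Prod.ext_iff]

lemma Yi_pow (j : ℕ) : Yi ^ j = AddMonoidAlgebra.single ((0 : ℤ), (-(j : ℤ)), (0 : ℕ)) 1 := by
  unfold Yi
  rw [AddMonoidAlgebra.single_pow]
  norm_num [Prod.ext_iff]

lemma single_mul_iota_apply (d : ℤ) (r : ℚ) (c : AddMonoidAlgebra ℚ (ℤ × ℕ))
    (i : ℤ) (m : ℕ) :
    (AddMonoidAlgebra.single ((0 : ℤ), d, (0 : ℕ)) r * iota c).coeff (i, 0, m)
      = r * (iota c).coeff (i, -d, m) := by
  apply AddMonoidAlgebra.coeff_single_mul_eq_mul_coeff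
  intro a _
  constructor
  · intro h
    have h1 : (0 : ℤ) + a.1 = i := congrArg Prod.fst h
    have h2 : d + a.2.1 = 0 := congrArg (fun p => p.2.1) h
    have h3 : (0 : ℕ) + a.2.2 = m := congrArg (fun p => p.2.2) h
    refine Prod.ext (by simpa using h1) (Prod.ext (by simp; omega) (by simpa using h3))
  · rintro rfl
    simp [Prod.ext_iff]

lemma W_pow_term (n j : ℕ) (i : ℤ) (m : ℕ) :
    ((Y * iota a0) ^ j * (Yi * iota b0) ^ (n - j) * (n.choose j : R3)).coeff (i, 0, m)
      = if 2 * j = n then (n.choose j : ℚ) * ((a0 ^ j * b0 ^ (n - j)).coeff (i, m)) else 0 := by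
  have key : (Y * iota a0) ^ j * (Yi * iota b0) ^ (n - j) * (n.choose j : R3)
      = AddMonoidAlgebra.single ((0 : ℤ), (j : ℤ) + (-((n - j : ℕ) : ℤ)), (0 : ℕ)) (n.choose j : ℚ)
        * iota (a0 ^ j * b0 ^ (n - j)) := by
    rw [mul_pow, mul_pow, map_mul, map_pow, map_pow, Y_pow, Yi_pow,
      AddMonoidAlgebra.natCast_def]
    rw [show ∀ u v w z : R3, u * v * (w * z) * AddMonoidAlgebra.single (0 : ℤ × ℤ × ℕ) ((n.choose j : ℕ) : ℚ)
        = ((u * w) * AddMonoidAlgebra.single (0 : ℤ × ℤ × ℕ) ((n.choose j : ℕ) : ℚ)) * (v * z)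
      from fun u v w z => by ring]
    rw [AddMonoidAlgebra.single_mul_single, AddMonoidAlgebra.single_mul_single]
    norm_num [Prod.ext_iff]
  rw [key, single_mul_iota_apply]
  by_cases h : 2 * j = n
  · have hd : (j : ℤ) + (-((n - j : ℕ) : ℤ)) = 0 := by
      have : n - j = j := by omega
      rw [this]; ring
    rw [hd]
    rw [show ((i : ℤ), -(0:ℤ), m) = eMap (i, m) from by simp [eMap], iota_apply_e]
    simp [h]
  · have hd : (j : ℤ) + (-((n - j : ℕ) : ℤ)) ≠ 0 := by omega
    rw [iota_apply_ne _ _ (by simpa using (neg_ne_zero.mpr hd))]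
    simp [h]

lemma W_pow_apply_even (k : ℕ) (i : ℤ) (m : ℕ) :
    (W ^ (2 * k)).coeff (i, 0, m) = (Nat.centralBinom k : ℚ) * (((a0 * b0) ^ k).coeff (i, m)) := by
  rw [W_eq, add_pow, AddMonoidAlgebra.coeff_sum, Finsupp.finset_sum_apply]
  rw [Finset.sum_eq_single k]
  · rw [W_pow_term, if_pos rfl, show 2 * k - k = k from by omega, Nat.centralBinom, mul_pow]
  · intro j _ hj
    rw [W_pow_term, if_neg (by omega)]
  · intro h
    exact absurd (Finset.mem_range.mpr (by omega)) h

lemma W_pow_apply_odd (n : ℕ) (hn : n % 2 = 1) (i : ℤ) (m : ℕ) :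
    (W ^ n).coeff (i, 0, m) = 0 := by
  rw [W_eq, add_pow, AddMonoidAlgebra.coeff_sum, Finsupp.finset_sum_apply]
  apply Finset.sum_eq_zero
  intro j _
  rw [W_pow_term, if_neg (by omega)]


lemma centralBinom_conv_nat (k : ℕ) :
    ∑ j ∈ Finset.range (k+1), Nat.centralBinom j * Nat.centralBinom (k - j) = 4 ^ k := by
  have h := Sconv_eq k
  unfold Sconv cb at h
  have : ((∑ j ∈ Finset.range (k+1), Nat.centralBinom j * Nat.centralBinom (k - j) : ℕ) : ℚ)
      = ((4 ^ k : ℕ) : ℚ) := by push_cast at h ⊢; exact h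
  exact_mod_cast this

lemma cA_eq : (vA + x2A) * (vA + xinv2A) = a0 * b0 := by
  unfold vA x2A xinv2A a0 b0
  rw [add_mul, mul_add, mul_add, add_mul, mul_add, mul_add]
  simp only [AddMonoidAlgebra.single_mul_single, one_mul]
  rw [show ((0:ℤ),(1:ℕ)) + ((0:ℤ),(1:ℕ)) = ((0:ℤ),(2:ℕ)) from by norm_num [Prod.ext_iff],
    show ((0:ℤ),(1:ℕ)) + ((-2:ℤ),(0:ℕ)) = ((-2:ℤ),(1:ℕ)) from by norm_num [Prod.ext_iff],
    show ((2:ℤ),(0:ℕ)) + ((0:ℤ),(1:ℕ)) = ((2:ℤ),(1:ℕ)) from by norm_num [Prod.ext_iff],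
    show ((2:ℤ),(0:ℕ)) + ((-2:ℤ),(0:ℕ)) = ((0:ℤ),(0:ℕ)) from by norm_num [Prod.ext_iff],
    show ((1:ℤ),(1:ℕ)) + ((1:ℤ),(0:ℕ)) = ((2:ℤ),(1:ℕ)) from by norm_num [Prod.ext_iff],
    show ((1:ℤ),(1:ℕ)) + ((-1:ℤ),(1:ℕ)) = ((0:ℤ),(2:ℕ)) from by norm_num [Prod.ext_iff],
    show ((-1:ℤ),(0:ℕ)) + ((1:ℤ),(0:ℕ)) = ((0:ℤ),(0:ℕ)) from by norm_num [Prod.ext_iff],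
    show ((-1:ℤ),(0:ℕ)) + ((-1:ℤ),(1:ℕ)) = ((-2:ℤ),(1:ℕ)) from by norm_num [Prod.ext_iff]]
  abel

lemma sum_even_helper {M : Type*} [AddCommMonoid M] (f : ℕ → M)
    (hf : ∀ p, p % 2 = 1 → f p = 0) (k : ℕ) :
    ∑ p ∈ Finset.range (2 * k + 1), f p = ∑ j ∈ Finset.range (k + 1), f (2 * j) := by
  induction k with
  | zero => simp
  | succ k ih =>
    rw [show 2 * (k+1) + 1 = (2*k+1) + 1 + 1 from by ring, Finset.sum_range_succ,
      Finset.sum_range_succ, ih, Finset.sum_range_succ (fun j => f (2 * j)) (k+1),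
      hf (2*k+1) (by omega), show 2*k+1+1 = 2*(k+1) from by ring]
    abel


section Bcoeff

variable (B : PowerSeries A0)
    (hB : ∀ (n : ℕ) (i : ℤ) (m : ℕ),
      (PowerSeries.coeff n B).coeff (i, m) = (bilatCount n i m : ℚ))

include hB

lemma coeff_B_even (k : ℕ) :
    PowerSeries.coeff (2 * k) B = Nat.centralBinom k • (a0 * b0) ^ k := by
  ext p
  obtain ⟨i, m⟩ := p
  rw [hB, bilatCount_eq, W_pow_apply_even, AddMonoidAlgebra.coeff_smul, Finsupp.smul_apply, nsmul_eq_mul]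

lemma coeff_B_odd (n : ℕ) (hn : n % 2 = 1) : PowerSeries.coeff n B = 0 := by
  ext p
  obtain ⟨i, m⟩ := p
  rw [hB, bilatCount_eq, W_pow_apply_odd n hn, AddMonoidAlgebra.coeff_zero, Finsupp.zero_apply]

lemma coeff_sq_even (k : ℕ) :
    PowerSeries.coeff (2 * k) (B ^ 2) = (4 ^ k : ℕ) • (a0 * b0) ^ k := by
  rw [sq, PowerSeries.coeff_mul, Finset.Nat.sum_antidiagonal_eq_sum_range_succ_mk]
  rw [sum_even_helper (fun p => PowerSeries.coeff p B * PowerSeries.coeff (2*k - p) B)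
    (fun p hp => by
      show PowerSeries.coeff p B * PowerSeries.coeff (2*k - p) B = 0
      rw [coeff_B_odd B hB p hp, zero_mul]) k]
  rw [show ∑ j ∈ Finset.range (k+1),
        PowerSeries.coeff (2*j) B * PowerSeries.coeff (2*k - 2*j) B
      = ∑ j ∈ Finset.range (k+1),
        (Nat.centralBinom j * Nat.centralBinom (k - j)) • (a0 * b0) ^ k from ?_]
  · rw [← Finset.sum_smul, centralBinom_conv_nat]
  · apply Finset.sum_congr rfl
    intro j hj
    have hjk : j ≤ k := by rw [Finset.mem_range] at hj; omega
    rw [show 2*k - 2*j = 2*(k - j) from by omega, coeff_B_even B hB, coeff_B_even B hB,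
      nsmul_eq_mul, nsmul_eq_mul, nsmul_eq_mul]
    calc (Nat.centralBinom j : A0) * (a0*b0)^j * ((Nat.centralBinom (k-j) : A0) * (a0*b0)^(k-j))
        = ((Nat.centralBinom j : A0) * (Nat.centralBinom (k-j) : A0))
          * ((a0*b0)^j * (a0*b0)^(k-j)) := by ring
      _ = ((Nat.centralBinom j * Nat.centralBinom (k-j) : ℕ) : A0) * (a0*b0)^k := by
          rw [← pow_add, show j + (k - j) = k from by omega]; push_cast; ring

lemma coeff_sq_odd (n : ℕ) (hn : n % 2 = 1) : PowerSeries.coeff n (B ^ 2) = 0 := by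
  rw [sq, PowerSeries.coeff_mul, Finset.Nat.sum_antidiagonal_eq_sum_range_succ_mk]
  apply Finset.sum_eq_zero
  intro p hp
  rw [Finset.mem_range] at hp
  rcases Nat.even_or_odd p with ⟨r, hr⟩ | ⟨r, hr⟩
  · have : (n - p) % 2 = 1 := by omega
    rw [coeff_B_odd B hB _ this, mul_zero]
  · rw [coeff_B_odd B hB p (by omega), zero_mul]

end Bcoeff


/-- the generating function `B(x;t,v)` of bilateral walks on the diagonal
square lattice (with `v` marking the steps `(1,1)` and `(-1,-1)`) satisfies
`B² (1 - 4t²(v + x²)(v + x⁻²)) = 1`. -/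
theorem statement4 (B : PowerSeries A0)
    (hB : ∀ (n : ℕ) (i : ℤ) (m : ℕ),
      (PowerSeries.coeff n B).coeff (i, m) = (bilatCount n i m : ℚ)) :
    B ^ 2 * (1 - 4 * PowerSeries.X ^ 2
      * PowerSeries.C ((vA + x2A) * (vA + xinv2A))) = 1 := by
  have key : B ^ 2 * (1 - 4 * PowerSeries.X ^ 2 * PowerSeries.C ((vA + x2A) * (vA + xinv2A)))
      = B ^ 2 - PowerSeries.X ^ 2
          * (PowerSeries.C (4 * ((vA + x2A) * (vA + xinv2A))) * B ^ 2) := by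
    rw [show PowerSeries.C (4 * ((vA + x2A) * (vA + xinv2A)))
        = 4 * PowerSeries.C ((vA + x2A) * (vA + xinv2A)) from by
      rw [map_mul, map_ofNat]]
    ring
  rw [key]
  ext n : 1
  rw [map_sub, PowerSeries.coeff_X_pow_mul', PowerSeries.coeff_C_mul, PowerSeries.coeff_one]
  rcases Nat.even_or_odd n with ⟨k, hk⟩ | ⟨k, hk⟩
  · have hn : n = 2 * k := by omega
    subst hn
    rcases k with _ | k
    · have h0 := coeff_sq_even B hB 0
      rw [show (2 * 0 : ℕ) = 0 from rfl] at h0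
      rw [h0, if_neg (by omega : ¬ (2:ℕ) ≤ 0), if_pos rfl]
      norm_num
    · rw [if_pos (by omega : 2 ≤ 2 * (k + 1)), if_neg (by omega : ¬ 2 * (k + 1) = 0)]
      rw [show 2 * (k + 1) - 2 = 2 * k from by omega, coeff_sq_even B hB,
        coeff_sq_even B hB, cA_eq, nsmul_eq_mul, nsmul_eq_mul]
      push_cast
      ring
  · have hn : n = 2 * k + 1 := by omega
    subst hn
    rw [coeff_sq_odd B hB _ (by omega), if_neg (by omega : ¬ 2 * k + 1 = 0)]
    rcases k with _ | k
    · norm_num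
    · rw [if_pos (by omega : 2 ≤ 2 * (k + 1) + 1),
        show 2 * (k + 1) + 1 - 2 = 2 * k + 1 from by omega,
        coeff_sq_odd B hB _ (by omega)]
      simp

end SlitPlane
end

section
/- Let S be a finite subset of Z^2 and let S-bar = {(-i,-j) : (i,j) in S} be the reversed step set. Let S_0(x;t) in Q[x,x^{-1}][[t]] be the generating function for bilateral walks on the slit plane with steps in S, let S-bar_0(x;t) be the analogous generating function for steps in S-bar, let L(t) in Q[[t]] be the generating function for loops with steps in S, and let B(x;t) be the generating function for bilateral walks with steps in S. Then, in Q[x,x^{-1}][[t]], S-bar_0(x^{-1};t) * L(t) * S_0(x;t) = B(x;t). -/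
open scoped Classical
open PowerSeries

namespace SlitPlane

/-- The reversed step set `S̄ = {(-i,-j) : (i,j) ∈ S}`. -/
def revSteps (S : Finset Pt) : Finset Pt := S.image (fun s => (-s.1, -s.2))

-- helpers
lemma vert_zero (l : List Pt) : vert l 0 = 0 := by simp [vert]

lemma vert_append_left_s6 (l₁ l₂ : List Pt) {j : ℕ} (h : j ≤ l₁.length) :
    vert (l₁ ++ l₂) j = vert l₁ j := by
  simp [vert, List.take_append_of_le_length h]

lemma vert_append_right_s6 (l₁ l₂ : List Pt) (j : ℕ) :
    vert (l₁ ++ l₂) (l₁.length + j) = l₁.sum + vert l₂ j := by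
  simp [vert, List.take_append, List.take_of_length_le]

lemma sum_map_neg (l : List Pt) : (l.map fun s => -s).sum = -l.sum := by
  induction l with
  | nil => simp
  | cons x l ih => simp [ih]; abel

/-- negate and reverse a walk -/
def negL (l : List Pt) : List Pt := (l.map fun s => -s).reverse

@[simp] lemma negL_length (l : List Pt) : (negL l).length = l.length := by simp [negL]

@[simp] lemma negL_sum (l : List Pt) : (negL l).sum = -l.sum := by
  rw [negL, List.sum_reverse, sum_map_neg]

@[simp] lemma negL_negL (l : List Pt) : negL (negL l) = l := by
  simp [negL, List.map_reverse, List.map_map, Function.comp]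

lemma vert_negL (l : List Pt) {j : ℕ} (h : j ≤ l.length) :
    vert (negL l) j = vert l (l.length - j) - l.sum := by
  have h1 : (negL l).take j = ((l.map fun s => -s).drop (l.length - j)).reverse := by
    simp [negL, List.take_reverse]
  rw [vert, h1, List.sum_reverse, ← List.map_drop, sum_map_neg]
  have h2 : (l.take (l.length - j)).sum + (l.drop (l.length - j)).sum = l.sum :=
    List.sum_take_add_sum_drop l _
  rw [vert, ← h2]; abel

lemma vert_take (l : List Pt) {j m : ℕ} (h : j ≤ m) :
    vert (l.take m) j = vert l j := by
  simp [vert, List.take_take, Nat.min_eq_left h]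

lemma vert_drop (l : List Pt) {m : ℕ} (h : m ≤ l.length) (j : ℕ) :
    vert (l.drop m) j = vert l (m + j) - vert l m := by
  have hm : (l.take m).length = m := List.length_take_of_le h
  have key : vert l (m + j) = vert l m + vert (l.drop m) j := by
    conv_lhs => rw [← List.take_append_drop m l]
    rw [show m + j = (l.take m).length + j from by rw [hm], vert_append_right_s6]
    rfl
  rw [key]; abel
/-- A "cut" of a bilateral walk: `i1` is the first visit and `i2` the last visit
to the leftmost x-axis point `(k,0)` of the walk. -/
def Cut (l : List Pt) (i1 i2 : ℕ) (k : ℤ) : Prop :=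
  i1 ≤ i2 ∧ i2 ≤ l.length ∧ vert l i1 = (k, 0) ∧ vert l i2 = (k, 0) ∧
  (∀ j, j < i1 → (vert l j).2 = 0 → k < (vert l j).1) ∧
  (∀ j, i1 ≤ j → j ≤ i2 → (vert l j).2 = 0 → k ≤ (vert l j).1) ∧
  (∀ j, i2 < j → j ≤ l.length → (vert l j).2 = 0 → k < (vert l j).1)

lemma cut_unique {l : List Pt} {i1 i2 i1' i2' : ℕ} {k k' : ℤ}
    (h : Cut l i1 i2 k) (h' : Cut l i1' i2' k') : i1 = i1' ∧ i2 = i2' ∧ k = k' := by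
  obtain ⟨h12, h2n, hv1, hv2, hpre, hmid, hsuf⟩ := h
  obtain ⟨h12', h2n', hv1', hv2', hpre', hmid', hsuf'⟩ := h'
  -- first component
  have key : ∀ {a1 a2 b1 b2 : ℕ} {c c' : ℤ}, Cut l a1 a2 c → Cut l b1 b2 c' → ¬ (a1 < b1) := by
    intro a1 a2 b1 b2 c c' hc hc' hlt
    obtain ⟨g12, g2n, gv1, gv2, gpre, gmid, gsuf⟩ := hc
    obtain ⟨g12', g2n', gv1', gv2', gpre', gmid', gsuf'⟩ := hc'
    have hy : (vert l a1).2 = 0 := by rw [gv1]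
    have h1 : c' < c := by have := gpre' a1 hlt hy; rwa [gv1] at this
    have hy' : (vert l b1).2 = 0 := by rw [gv1']
    rcases le_or_gt b1 a2 with hb | hb
    · have h2 : c ≤ c' := by
        have := gmid b1 (le_of_lt (lt_of_lt_of_le hlt (le_refl _))) hb hy'
        rwa [gv1'] at this
      omega
    · have h2 : c < c' := by
        have := gsuf b1 hb (le_trans g12' g2n') hy'
        rwa [gv1'] at this
      omega
  have e1 : i1 = i1' := by
    rcases lt_trichotomy i1 i1' with h | h | h
    · exact absurd h (key ⟨h12, h2n, hv1, hv2, hpre, hmid, hsuf⟩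
        ⟨h12', h2n', hv1', hv2', hpre', hmid', hsuf'⟩)
    · exact h
    · exact absurd h (key ⟨h12', h2n', hv1', hv2', hpre', hmid', hsuf'⟩
        ⟨h12, h2n, hv1, hv2, hpre, hmid, hsuf⟩)
  have ek : k = k' := by
    have : (k, (0:ℤ)) = (k', 0) := by rw [← hv1, e1, hv1']
    exact (Prod.mk.injEq _ _ _ _).mp this |>.1
  subst ek; subst e1
  have e2 : i2 = i2' := by
    rcases lt_trichotomy i2 i2' with h | h | h
    · have hy : (vert l i2').2 = 0 := by rw [hv2']
      have := hsuf i2' h h2n' hy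
      rw [hv2'] at this; omega
    · exact h
    · have hy : (vert l i2).2 = 0 := by rw [hv2]
      have := hsuf' i2 h h2n hy
      rw [hv2] at this; omega
  exact ⟨rfl, e2, rfl⟩

lemma cut_exists {l : List Pt} {i : ℤ} (hend : l.sum = (i, 0)) :
    ∃ i1 i2 k, Cut l i1 i2 k := by
  classical
  set n := l.length with hn
  have h0 : (0 : ℕ) ∈ (Finset.range (n+1)).filter (fun j => (vert l j).2 = 0) := by
    simp [vert_zero]
  set axisT := (Finset.range (n+1)).filter (fun j => (vert l j).2 = 0) with haxis
  have hne : axisT.Nonempty := ⟨0, h0⟩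
  set k := axisT.inf' hne (fun j => (vert l j).1) with hk
  obtain ⟨j0, hj0, hj0k⟩ := Finset.exists_mem_eq_inf' hne (fun j => (vert l j).1)
  set visits := axisT.filter (fun j => (vert l j).1 = k) with hvisits
  have hvne : visits.Nonempty := ⟨j0, by simp [hvisits, hj0, hj0k.symm, ← hk]⟩
  set i1 := visits.min' hvne with hi1
  set i2 := visits.max' hvne with hi2
  have hmem1 : i1 ∈ visits := visits.min'_mem hvne
  have hmem2 : i2 ∈ visits := visits.max'_mem hvne
  have visit_vert : ∀ j ∈ visits, vert l j = (k, 0) := by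
    intro j hj
    simp only [hvisits, haxis, Finset.mem_filter, Finset.mem_range] at hj
    obtain ⟨⟨_, hy⟩, hx⟩ := hj
    exact Prod.ext hx hy
  have visit_le : ∀ j ∈ visits, j ≤ n := by
    intro j hj
    simp only [hvisits, haxis, Finset.mem_filter, Finset.mem_range] at hj
    omega
  have axis_lb : ∀ j, j ≤ n → (vert l j).2 = 0 → k ≤ (vert l j).1 := by
    intro j hj hy
    exact Finset.inf'_le _ (by simp [haxis, Finset.mem_range, hy]; omega)
  have axis_visit : ∀ j, j ≤ n → (vert l j).2 = 0 → (vert l j).1 = k → j ∈ visits := by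
    intro j hj hy hx
    simp [hvisits, haxis, hx, hy]; omega
  refine ⟨i1, i2, k, visits.min'_le _ hmem2, visit_le _ hmem2,
    visit_vert _ hmem1, visit_vert _ hmem2, ?_, ?_, ?_⟩
  · intro j hjlt hy
    have hjn : j ≤ n := le_trans (le_of_lt hjlt) (le_trans (visits.min'_le _ hmem2) (visit_le _ hmem2))
    have hlb := axis_lb j hjn hy
    rcases eq_or_lt_of_le hlb with he | hlt
    · exact absurd (visits.min'_le _ (axis_visit j hjn hy he.symm)) (by omega)
    · exact hlt
  · intro j _ hj2 hy
    exact axis_lb j (le_trans hj2 (visit_le _ hmem2)) hy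
  · intro j hjgt hjn hy
    have hlb := axis_lb j hjn hy
    rcases eq_or_lt_of_le hlb with he | hlt
    · exact absurd (visits.le_max' _ (axis_visit j hjn hy he.symm)) (by omega)
    · exact hlt

def slitSet (T : Finset Pt) (n : ℕ) (e : Pt) : Set (List Pt) :=
  {l | l.length = n ∧ StepsIn T l ∧ AvoidsH l ∧ l.sum = e}

def loopSet (S : Finset Pt) (n : ℕ) : Set (List Pt) :=
  {l | l.length = n ∧ StepsIn S l ∧ (∀ i ≤ l.length, ¬ OnNegAxis (vert l i)) ∧ l.sum = (0, 0)}

def glue (u v w : List Pt) : List Pt := negL u ++ v ++ w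

lemma neg_mem_revSteps {S : Finset Pt} {x : Pt} (h : x ∈ revSteps S) : -x ∈ S := by
  simp only [revSteps, Finset.mem_image] at h
  obtain ⟨t, ht, rfl⟩ := h
  simpa [Prod.ext_iff] using ht

lemma mem_revSteps_of_neg {S : Finset Pt} {x : Pt} (h : x ∈ S) : -x ∈ revSteps S := by
  simp only [revSteps, Finset.mem_image]
  exact ⟨x, h, by simp [Prod.ext_iff]⟩

lemma glue_steps {S : Finset Pt} {u v w : List Pt}
    (hu : StepsIn (revSteps S) u) (hv : StepsIn S v) (hw : StepsIn S w) :
    StepsIn S (glue u v w) := by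
  intro s hs
  simp only [glue, List.mem_append] at hs
  rcases hs with (hs | hs) | hs
  · simp only [negL, List.mem_reverse, List.mem_map] at hs
    obtain ⟨x, hx, rfl⟩ := hs
    exact neg_mem_revSteps (hu x hx)
  · exact hv s hs
  · exact hw s hs

@[simp] lemma glue_length (u v w : List Pt) :
    (glue u v w).length = u.length + v.length + w.length := by simp [glue]; omega

lemma glue_sum {u v w : List Pt} {a b : ℤ} (hu : u.sum = (-a, 0)) (hv : v.sum = (0, 0))
    (hw : w.sum = (b, 0)) : (glue u v w).sum = (a + b, 0) := by
  simp [glue, hu, hv, hw, Prod.ext_iff]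

lemma vert_glue_left {u : List Pt} (v w : List Pt) {a : ℤ} (hu : u.sum = (-a, 0))
    {j : ℕ} (hj : j ≤ u.length) :
    vert (glue u v w) j = vert u (u.length - j) + (a, 0) := by
  rw [glue, List.append_assoc, vert_append_left_s6 _ _ (by simpa using hj),
    vert_negL _ hj, hu]
  rw [sub_eq_add_neg]
  congr 1
  simp [Prod.ext_iff]

lemma vert_glue_mid {u : List Pt} (v w : List Pt) {a : ℤ} (hu : u.sum = (-a, 0)) (m : ℕ) :
    vert (glue u v w) (u.length + m) = vert (v ++ w) m + (a, 0) := by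
  rw [glue, List.append_assoc, show u.length = (negL u).length from (negL_length u).symm,
    vert_append_right_s6, negL_sum, hu, add_comm]
  congr 1
  simp [Prod.ext_iff]

/-- recomposition: gluing a valid triple produces a walk with a cut. -/
lemma glue_cut {u v w : List Pt} {a b : ℤ}
    (hua : AvoidsH u) (husum : u.sum = (-a, 0))
    (hvn : ∀ i ≤ v.length, ¬ OnNegAxis (vert v i)) (hvsum : v.sum = (0, 0))
    (hwa : AvoidsH w) (hwsum : w.sum = (b, 0)) :
    Cut (glue u v w) u.length (u.length + v.length) a := by
  have hv0 : v.sum = (0 : Pt) := hvsum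
  refine ⟨Nat.le_add_right _ _, by simp, ?_, ?_, ?_, ?_, ?_⟩
  · rw [vert_glue_left v w husum (le_refl _), Nat.sub_self, vert_zero, zero_add]
  · rw [vert_glue_mid v w husum, vert_append_left_s6 _ _ (le_refl _), vert_length, hv0, zero_add]
  · -- prefix
    intro j hj hy
    rw [vert_glue_left v w husum (le_of_lt hj)] at hy ⊢
    set m := u.length - j with hm
    have hm1 : 1 ≤ m := by omega
    have hm2 : m ≤ u.length := by omega
    have := hua m hm1 hm2
    simp only [OnH, not_and, not_le] at this
    have hy2 : (vert u m).2 = 0 := by simpa using hy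
    have := this hy2
    simp only [Prod.fst_add]
    omega
  · -- middle
    intro j hj1 hj2 hy
    obtain ⟨m, rfl⟩ := Nat.exists_eq_add_of_le hj1
    have hmv : m ≤ v.length := by omega
    rw [vert_glue_mid v w husum, vert_append_left_s6 _ _ hmv] at hy ⊢
    have := hvn m hmv
    simp only [OnNegAxis, not_and, not_lt] at this
    have hy2 : (vert v m).2 = 0 := by simpa using hy
    have := this hy2
    simp only [Prod.fst_add]
    omega
  · -- suffix
    intro j hj1 hj2 hy
    obtain ⟨m, rfl⟩ := Nat.exists_eq_add_of_le (le_of_lt hj1)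
    have hm1 : 1 ≤ m := by omega
    have hj2' : u.length + v.length + m = u.length + (v.length + m) := by omega
    rw [hj2'] at hy ⊢
    have hmw : m ≤ w.length := by simp at hj2; omega
    rw [vert_glue_mid v w husum, show v.length + m = v.length + m from rfl,
      show (v:List Pt).length + m = v.length + m from rfl] at hy ⊢
    rw [vert_append_right_s6, hv0, zero_add] at hy ⊢
    have := hwa m hm1 hmw
    simp only [OnH, not_and, not_le] at this
    have hy2 : (vert w m).2 = 0 := by simpa using hy
    have := this hy2
    simp only [Prod.fst_add]
    omega
/-- decomposition: a cut walk factors as a glued triple. -/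
lemma cut_decomp {S : Finset Pt} {l : List Pt} {i1 i2 : ℕ} {k i : ℤ}
    (hsteps : StepsIn S l) (hsum : l.sum = (i, 0)) (hc : Cut l i1 i2 k) :
    ∃ u v w : List Pt,
      u.length = i1 ∧ v.length = i2 - i1 ∧ w.length = l.length - i2 ∧
      StepsIn (revSteps S) u ∧ AvoidsH u ∧ u.sum = (-k, 0) ∧
      StepsIn S v ∧ (∀ m ≤ v.length, ¬ OnNegAxis (vert v m)) ∧ v.sum = (0, 0) ∧
      StepsIn S w ∧ AvoidsH w ∧ w.sum = (i - k, 0) ∧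
      glue u v w = l := by
  obtain ⟨h12, h2n, hv1, hv2, hpre, hmid, hsuf⟩ := hc
  have h1n : i1 ≤ l.length := le_trans h12 h2n
  set p := l.take i1 with hp
  have hplen : p.length = i1 := List.length_take_of_le h1n
  have hpsum : p.sum = (k, 0) := hv1
  refine ⟨negL p, (l.drop i1).take (i2 - i1), l.drop i2, by simp [hplen], ?_, by simp, ?_, ?_, ?_,
    ?_, ?_, ?_, ?_, ?_, ?_, ?_⟩
  · simp; omega
  · -- steps of u
    intro s hs
    simp only [negL, List.mem_reverse, List.mem_map] at hs
    obtain ⟨x, hx, rfl⟩ := hs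
    exact mem_revSteps_of_neg (hsteps x (List.take_subset _ _ hx))
  · -- AvoidsH u
    intro j hj1 hj2
    rw [negL_length, hplen] at hj2
    rw [vert_negL _ (by rw [hplen]; exact hj2), hplen, hpsum,
      vert_take _ (by omega : i1 - j ≤ i1)]
    intro hOn
    obtain ⟨hy, hx⟩ := hOn
    simp only [Prod.snd_sub, Prod.fst_sub] at hy hx
    have h2 : (vert l (i1 - j)).2 = 0 := by simpa using hy
    have := hpre (i1 - j) (by omega) h2
    simp at hx
    omega
  · rw [negL_sum, hpsum]; simp [Prod.ext_iff]
  · -- steps of v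
    intro s hs
    exact hsteps s (List.drop_subset _ _ (List.take_subset _ _ hs))
  · -- loop vertex condition
    intro m hm
    have hvlen : ((l.drop i1).take (i2 - i1)).length = i2 - i1 := by simp; omega
    rw [hvlen] at hm
    rw [vert_take _ hm, vert_drop _ h1n, hv1]
    intro hOn
    obtain ⟨hy, hx⟩ := hOn
    simp only [Prod.snd_sub, Prod.fst_sub] at hy hx
    have h2 : (vert l (i1 + m)).2 = 0 := by simpa using hy
    have := hmid (i1 + m) (by omega) (by omega) h2
    simp at hx
    omega
  · -- v.sum
    have hvlen : ((l.drop i1).take (i2 - i1)).length = i2 - i1 := by simp; omega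
    have : ((l.drop i1).take (i2 - i1)).sum = vert (l.drop i1) (i2 - i1) := rfl
    rw [this, vert_drop _ h1n, show i1 + (i2 - i1) = i2 from by omega, hv1, hv2]
    simp; rfl
  · -- steps of w
    intro s hs
    exact hsteps s (List.drop_subset _ _ hs)
  · -- AvoidsH w
    intro m hm1 hm2
    rw [List.length_drop] at hm2
    rw [vert_drop _ h2n, hv2]
    intro hOn
    obtain ⟨hy, hx⟩ := hOn
    simp only [Prod.snd_sub, Prod.fst_sub] at hy hx
    have h2 : (vert l (i2 + m)).2 = 0 := by simpa using hy
    have := hsuf (i2 + m) (by omega) (by omega) h2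
    simp at hx
    omega
  · -- w.sum
    have : (l.take i2).sum + (l.drop i2).sum = l.sum := List.sum_take_add_sum_drop l _
    have h2 : (l.take i2).sum = (k, 0) := hv2
    rw [h2, hsum] at this
    have := congrArg (fun q : Pt => q - (k, 0)) this
    simp only [Prod.ext_iff] at this ⊢
    simp at this
    constructor <;> omega
  · -- glue = l
    rw [glue, negL_negL, List.append_assoc]
    have hdd : (l.drop i1).drop (i2 - i1) = l.drop i2 := by
      rw [List.drop_drop]; congr 1; omega
    rw [← hdd, List.take_append_drop, hp, List.take_append_drop]
lemma finite_restrict (T : Finset Pt) (n : ℕ) (P : List Pt → Prop) :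
    {l : List Pt | l.length = n ∧ StepsIn T l ∧ P l}.Finite := by
  have h1 : {l : List {x : Pt // x ∈ T} | l.length = n}.Finite := List.finite_length_eq _ n
  apply Set.Finite.subset (h1.image (List.map Subtype.val))
  rintro l ⟨hlen, hsteps, -⟩
  refine ⟨l.attach.map (fun x => (⟨x.1, hsteps x.1 x.2⟩ : {y : Pt // y ∈ T})), by simpa using hlen, ?_⟩
  rw [List.map_map]
  have : (Subtype.val ∘ fun x : {x // x ∈ l} => (⟨x.1, hsteps x.1 x.2⟩ : {y : Pt // y ∈ T})) =
      fun x : {x // x ∈ l} => x.1 := rfl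
  rw [this]
  exact List.attach_map_subtype_val l
lemma ncard_prod {α β : Type*} (s : Set α) (t : Set β) (hs : s.Finite) (ht : t.Finite) :
    (s ×ˢ t).ncard = s.ncard * t.ncard := by
  rw [Set.ncard_eq_toFinset_card _ (hs.prod ht), Set.ncard_eq_toFinset_card _ hs,
    Set.ncard_eq_toFinset_card _ ht, ← Finset.card_product]
  congr 1
  ext p
  simp
lemma ncard_biUnion {ι α : Type*} (J : Finset ι) (t : ι → Set α)
    (hfin : ∀ j ∈ J, (t j).Finite)
    (hdis : ∀ x ∈ J, ∀ y ∈ J, x ≠ y → Disjoint (t x) (t y)) :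
    (⋃ j ∈ J, t j).ncard = ∑ j ∈ J, (t j).ncard := by
  classical
  induction J using Finset.induction_on with
  | empty => simp
  | @insert x s hx ih =>
    rw [Finset.set_biUnion_insert, Finset.sum_insert hx]
    rw [Set.ncard_union_eq ?disj (hfin x (by simp)) ?fin]
    · rw [ih (fun j hj => hfin j (by simp [hj]))
        (fun u hu v hv huv => hdis u (by simp [hu]) v (by simp [hv]) huv)]
    case disj =>
      simp only [Set.disjoint_iUnion_right]
      intro j hj
      exact hdis x (by simp) j (by simp [hj]) (by rintro rfl; exact hx hj)
    case fin =>
      apply Set.Finite.biUnion (s.finite_toSet)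
      intro j hj
      exact hfin j (by simp [Finset.mem_coe.mp hj])
lemma sum_fst_natAbs_le (T : Finset Pt) (l : List Pt) (h : StepsIn T l) :
    l.sum.1.natAbs ≤ l.length * (T.sup fun s => s.1.natAbs) := by
  induction l with
  | nil => simp
  | cons x l ih =>
    have hx : x.1.natAbs ≤ T.sup fun s => s.1.natAbs :=
      Finset.le_sup (f := fun s : Pt => s.1.natAbs) (h x (by simp))
    have hl := ih (fun s hs => h s (by simp [hs]))
    have : ((x :: l).sum).1 = x.1 + l.sum.1 := by simp
    rw [this, List.length_cons]
    have := Int.natAbs_add_le x.1 l.sum.1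
    calc (x.1 + l.sum.1).natAbs ≤ x.1.natAbs + l.sum.1.natAbs := Int.natAbs_add_le _ _
      _ ≤ (T.sup fun s => s.1.natAbs) + l.length * (T.sup fun s => s.1.natAbs) := by omega
      _ = (l.length + 1) * (T.sup fun s => s.1.natAbs) := by ring

lemma slitCount_eq (T : Finset Pt) (n : ℕ) (e : Pt) :
    slitCount T n e = (slitSet T n e).ncard := rfl
lemma loopCount_eq (S : Finset Pt) (n : ℕ) : loopCount S n = (loopSet S n).ncard := rfl

lemma slitSet_finite (T : Finset Pt) (n : ℕ) (e : Pt) : (slitSet T n e).Finite :=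
  finite_restrict T n _
lemma loopSet_finite (S : Finset Pt) (n : ℕ) : (loopSet S n).Finite :=
  finite_restrict S n _

/-- the index type for the decomposition -/
abbrev Idx := Σ _ : (ℕ × ℕ) × ℤ, ℕ × ℕ

variable (S : Finset Pt) (n : ℕ) (i : ℤ)

noncomputable def bigM : ℕ := (revSteps S).sup fun s => s.1.natAbs

noncomputable def idxSet : Finset Idx :=
  ((Finset.HasAntidiagonal.antidiagonal n) ×ˢ (Finset.Icc (-(n * bigM S : ℕ) : ℤ) ((n * bigM S : ℕ) : ℤ))).sigma
    fun x => Finset.HasAntidiagonal.antidiagonal x.1.1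

def glue3 (t : List Pt × List Pt × List Pt) : List Pt := glue t.1 t.2.1 t.2.2

def tripleSet (σ : Idx) : Set (List Pt × List Pt × List Pt) :=
  (slitSet (revSteps S) σ.2.1 (-σ.1.2, 0)) ×ˢ (loopSet S σ.2.2) ×ˢ
    (slitSet S σ.1.1.2 (i - σ.1.2, 0))

noncomputable def Dset (σ : Idx) : Set (List Pt) := glue3 '' tripleSet S i σ

lemma tripleSet_finite (σ : Idx) : (tripleSet S i σ).Finite :=
  (slitSet_finite _ _ _).prod ((loopSet_finite _ _).prod (slitSet_finite _ _ _))

lemma glue3_injOn (σ : Idx) : Set.InjOn glue3 (tripleSet S i σ) := by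
  rintro ⟨u, v, w⟩ ⟨hu, hv, hw⟩ ⟨u', v', w'⟩ ⟨hu', hv', hw'⟩ heq
  obtain ⟨hul, -, -, -⟩ := hu
  obtain ⟨hvl, -, -, -⟩ := hv
  obtain ⟨hwl, -, -, -⟩ := hw
  obtain ⟨hul', -, -, -⟩ := hu'
  obtain ⟨hvl', -, -, -⟩ := hv'
  obtain ⟨hwl', -, -, -⟩ := hw'
  simp only [glue3, glue] at heq
  obtain ⟨h1, h2⟩ := List.append_inj heq (by simp [hul, hul', hvl, hvl'])
  obtain ⟨h3, h4⟩ := List.append_inj h1 (by simp [hul, hul'])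
  have hu : u = u' := by
    have := congrArg negL h3
    rwa [negL_negL, negL_negL] at this
  simp [hu, h4, h2]

lemma Dset_card (σ : Idx) :
    (Dset S i σ).ncard =
      slitCount (revSteps S) σ.2.1 (-σ.1.2, 0) * loopCount S σ.2.2 *
        slitCount S σ.1.1.2 (i - σ.1.2, 0) := by
  rw [Dset, Set.ncard_image_of_injOn (glue3_injOn S i σ), tripleSet,
    ncard_prod _ _ (slitSet_finite _ _ _) ((loopSet_finite _ _).prod (slitSet_finite _ _ _)),
    ncard_prod _ _ (loopSet_finite _ _) (slitSet_finite _ _ _),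
    slitCount_eq, slitCount_eq, loopCount_eq, mul_assoc]

lemma walkSet_eq_biUnion :
    {l : List Pt | l.length = n ∧ StepsIn S l ∧ l.sum = (i, 0)} =
      ⋃ σ ∈ idxSet S n, Dset S i σ := by
  ext l
  simp only [Set.mem_setOf_eq, Set.mem_iUnion, exists_prop]
  constructor
  · rintro ⟨hlen, hsteps, hsum⟩
    obtain ⟨i1, i2, k, hc⟩ := cut_exists hsum
    obtain ⟨u, v, w, hul, hvl, hwl, hus, hua, husum, hvs, hvn, hvsum, hws, hwa, hwsum, hglue⟩ :=
      cut_decomp hsteps hsum hc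
    obtain ⟨h12, h2n, -, -, -, -, -⟩ := hc
    rw [hlen] at h2n hwl
    have hkabs : k.natAbs ≤ n * bigM S := by
      have := sum_fst_natAbs_le (revSteps S) u hus
      rw [husum] at this
      simp only [Int.natAbs_neg] at this
      calc k.natAbs ≤ u.length * bigM S := this
        _ ≤ n * bigM S := Nat.mul_le_mul_right _ (by omega)
    refine ⟨⟨((i2, n - i2), k), (i1, i2 - i1)⟩, ?_, ?_⟩
    · simp only [idxSet, Finset.mem_sigma, Finset.mem_product, Finset.HasAntidiagonal.mem_antidiagonal,
        Finset.mem_Icc]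
      refine ⟨⟨by omega, ?_⟩, by omega⟩
      constructor <;> omega
    · exact ⟨(u, v, w), ⟨⟨hul, hus, hua, husum⟩, ⟨hvl, hvs, hvn, hvsum⟩,
        ⟨hwl, hws, hwa, hwsum⟩⟩, hglue⟩
  · rintro ⟨σ, hσ, ⟨⟨u, v, w⟩, ⟨hu, hv, hw⟩, rfl⟩⟩
    obtain ⟨hul, hus, hua, husum⟩ := hu
    obtain ⟨hvl, hvs, hvn, hvsum⟩ := hv
    obtain ⟨hwl, hws, hwa, hwsum⟩ := hw
    simp only [idxSet, Finset.mem_sigma, Finset.mem_product, Finset.HasAntidiagonal.mem_antidiagonal,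
      Finset.mem_Icc] at hσ
    refine ⟨?_, glue_steps hus hvs hws, ?_⟩
    · rw [glue3, glue_length, hul, hvl, hwl]
      omega
    · rw [glue3, glue_sum husum hvsum hwsum]
      congr 1
      omega
lemma Dset_finite (σ : Idx) : (Dset S i σ).Finite := (tripleSet_finite S i σ).image _

lemma Dset_disjoint : ∀ σ ∈ idxSet S n, ∀ σ' ∈ idxSet S n, σ ≠ σ' →
    Disjoint (Dset S i σ) (Dset S i σ') := by
  rintro ⟨⟨⟨m, n3⟩, a⟩, n1, n2⟩ hσ ⟨⟨⟨m', n3'⟩, a'⟩, n1', n2'⟩ hσ' hne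
  rw [Set.disjoint_left]
  rintro l ⟨⟨u, v, w⟩, ⟨hu, hv, hw⟩, rfl⟩ ⟨⟨u', v', w'⟩, ⟨hu', hv', hw'⟩, heq⟩
  obtain ⟨hul, hus, hua, husum⟩ := hu
  obtain ⟨hvl, hvs, hvn, hvsum⟩ := hv
  obtain ⟨hwl, hws, hwa, hwsum⟩ := hw
  obtain ⟨hul', hus', hua', husum'⟩ := hu'
  obtain ⟨hvl', hvs', hvn', hvsum'⟩ := hv'
  obtain ⟨hwl', hws', hwa', hwsum'⟩ := hw'
  have hc : Cut (glue3 (u, v, w)) n1 (n1 + n2) a := by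
    have := glue_cut hua husum hvn hvsum hwa hwsum
    rwa [hul, hvl] at this
  have hc' : Cut (glue3 (u, v, w)) n1' (n1' + n2') a' := by
    have h2 := glue_cut hua' husum' hvn' hvsum' hwa' hwsum'
    rw [hul', hvl'] at h2
    rw [← heq]
    exact h2
  obtain ⟨e1, e2, e3⟩ := cut_unique hc hc'
  simp only [idxSet, Finset.mem_sigma, Finset.mem_product, Finset.HasAntidiagonal.mem_antidiagonal,
    Finset.mem_Icc] at hσ hσ'
  apply hne
  have em : m = m' := by omega
  have en3 : n3 = n3' := by omega
  have en2 : n2 = n2' := by omega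
  subst e1 e3 em en3 en2
  rfl

lemma core :
    walkCount S n (i, 0) =
      ∑ p ∈ Finset.HasAntidiagonal.antidiagonal n,
        ∑ a ∈ Finset.Icc (-((n * bigM S : ℕ) : ℤ)) ((n * bigM S : ℕ) : ℤ),
          ∑ q ∈ Finset.HasAntidiagonal.antidiagonal p.1,
            slitCount (revSteps S) q.1 (-a, 0) * loopCount S q.2 *
              slitCount S p.2 (i - a, 0) := by
  rw [walkCount, walkSet_eq_biUnion S n i,
    ncard_biUnion _ _ (fun σ _ => Dset_finite S i σ) (Dset_disjoint S n i)]
  rw [idxSet, Finset.sum_sigma, Finset.sum_product]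
  exact Finset.sum_congr rfl fun p _ => Finset.sum_congr rfl fun a _ =>
    Finset.sum_congr rfl fun q _ => Dset_card S i ⟨((p.1, p.2), a), q⟩

lemma mul_apply_superset (f g : L1) (s : Finset ℤ) (hs : f.coeff.support ⊆ s) (x : ℤ) :
    (f * g).coeff x = ∑ a ∈ s, f.coeff a * g.coeff (x - a) := by
  rw [AddMonoidAlgebra.coeff_mul, Finsupp.sum, Finset.sum_subset hs ?h0]
  · apply Finset.sum_congr rfl
    intro a _
    rw [Finsupp.sum]
    have hcong : ∀ a₂ ∈ g.coeff.support,
        (if a + a₂ = x then f.coeff a * g.coeff a₂ else 0) = if a₂ = x - a then f.coeff a * g.coeff a₂ else 0 := by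
      intro a₂ _
      congr 1
      simp only [eq_iff_iff]
      omega
    rw [Finset.sum_congr rfl hcong, Finset.sum_ite_eq' g.coeff.support (x - a) (fun a₂ => f.coeff a * g.coeff a₂)]
    by_cases h : x - a ∈ g.coeff.support
    · simp [h]
    · simp [h, Finsupp.notMem_support_iff.mp h]
  · intro a _ ha
    have : f.coeff a = 0 := Finsupp.notMem_support_iff.mp ha
    simp [Finsupp.sum, this]

lemma supp_bound {Sb : PowerSeries L1}
    (hSb : ∀ (m : ℕ) (x : ℤ),
      (PowerSeries.coeff (R := L1) m Sb).coeff x = (slitCount (revSteps S) m (-x, 0) : ℚ))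
    {q1 : ℕ} (hq : q1 ≤ n) (c : ℚ) :
    ((PowerSeries.coeff (R := L1) q1 Sb) * AddMonoidAlgebra.single (0:ℤ) c).coeff.support ⊆
      Finset.Icc (-((n * bigM S : ℕ) : ℤ)) ((n * bigM S : ℕ) : ℤ) := by
  intro a ha
  rw [Finsupp.mem_support_iff, AddMonoidAlgebra.coeff_mul_single_zero] at ha
  have hf : (PowerSeries.coeff (R := L1) q1 Sb).coeff a ≠ 0 := fun h => ha (by rw [h, zero_mul])
  rw [hSb] at hf
  have hcount : slitCount (revSteps S) q1 (-a, 0) ≠ 0 := by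
    exact_mod_cast hf
  rw [slitCount_eq] at hcount
  obtain ⟨l, hlen, hsteps, -, hsum⟩ := Set.nonempty_of_ncard_ne_zero hcount
  have hb := sum_fst_natAbs_le (revSteps S) l hsteps
  rw [hsum, hlen] at hb
  simp only [Int.natAbs_neg] at hb
  have hb2 : a.natAbs ≤ n * bigM S :=
    le_trans hb (Nat.mul_le_mul_right _ hq)
  rw [Finset.mem_Icc]
  omega



/-- `S̄₀(x⁻¹;t) · L(t) · S₀(x;t) = B(x;t)`, where `S₀` counts bilateral
walks on the slit plane with steps in `S`, `S̄₀` the same with reversed steps (the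
substitution `x ↦ x⁻¹` being expressed on coefficients), `L` counts loops and `B`
counts bilateral walks. -/
theorem statement6 (S : Finset Pt)
    (S0 Sb B : PowerSeries L1) (L : PowerSeries ℚ)
    (hS0 : ∀ (n : ℕ) (i : ℤ),
      (PowerSeries.coeff (R := L1) n S0).coeff i = (slitCount S n (i, 0) : ℚ))
    (hSb : ∀ (n : ℕ) (i : ℤ),
      (PowerSeries.coeff (R := L1) n Sb).coeff i = (slitCount (revSteps S) n (-i, 0) : ℚ))
    (hL : ∀ n : ℕ, PowerSeries.coeff (R := ℚ) n L = (loopCount S n : ℚ))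
    (hB : ∀ (n : ℕ) (i : ℤ),
      (PowerSeries.coeff (R := L1) n B).coeff i = (walkCount S n (i, 0) : ℚ)) :
    Sb * PowerSeries.map (algebraMap ℚ L1) L * S0 = B := by
  apply PowerSeries.ext; intro n
  apply AddMonoidAlgebra.ext; apply Finsupp.ext; intro j
  rw [hB n j]
  have hcoeff : ∀ m : ℕ, PowerSeries.coeff (R := L1) m (Sb * PowerSeries.map (algebraMap ℚ L1) L) =
      ∑ q ∈ Finset.HasAntidiagonal.antidiagonal m,
        (PowerSeries.coeff (R := L1) q.1 Sb) * AddMonoidAlgebra.single (0:ℤ) ((loopCount S q.2 : ℚ)) := by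
    intro m
    rw [PowerSeries.coeff_mul]
    apply Finset.sum_congr rfl
    intro q _
    congr 1
    rw [PowerSeries.coeff_map, hL]
    simp [AddMonoidAlgebra.coe_algebraMap]
  rw [PowerSeries.coeff_mul]
  rw [AddMonoidAlgebra.coeff_sum, Finset.sum_apply']
  have step : ∀ p ∈ Finset.HasAntidiagonal.antidiagonal n,
      ((PowerSeries.coeff (R := L1) p.1 (Sb * PowerSeries.map (algebraMap ℚ L1) L)) *
        PowerSeries.coeff (R := L1) p.2 S0).coeff j =
      ∑ a ∈ Finset.Icc (-((n * bigM S : ℕ) : ℤ)) ((n * bigM S : ℕ) : ℤ),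
        ∑ q ∈ Finset.HasAntidiagonal.antidiagonal p.1,
          (slitCount (revSteps S) q.1 (-a, 0) : ℚ) * (loopCount S q.2 : ℚ) *
            (slitCount S p.2 (j - a, 0) : ℚ) := by
    intro p hp
    have hp1 : p.1 ≤ n := by
      rw [Finset.HasAntidiagonal.mem_antidiagonal] at hp
      omega
    rw [hcoeff p.1, Finset.sum_mul, AddMonoidAlgebra.coeff_sum, Finset.sum_apply']
    rw [Finset.sum_congr rfl (fun q hq => ?_)]
    · exact (Finset.sum_comm)
    · -- per q : ((f * single 0 c) * g) j = ∑ a ∈ Icc, ...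
      have hq1 : q.1 ≤ n := by
        rw [Finset.HasAntidiagonal.mem_antidiagonal] at hq
        omega
      rw [mul_apply_superset _ _ _ (supp_bound S n hSb hq1 _)]
      apply Finset.sum_congr rfl
      intro a _
      rw [AddMonoidAlgebra.coeff_mul_single_zero, hSb, hS0]
  rw [Finset.sum_congr rfl step, core S n j]
  push_cast
  rfl


end SlitPlane
end
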